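/- arXiv:0805.2163 — 8 statements merged into one kernel-verified Lean document; each statement's English description precedes it below -/
import Mathlib

section
/- If G is a forest (a graph with no cycles), then the reduced Euler characteristic of the independence complex of G lies in {-1, 0, 1}. -/
open Finset

attribute [local instance] Classical.propDecidable

/-- `s` is an independent set of the graph `G`. -/
def SimpleGraph.IsIndep {V : Type*} (G : SimpleGraph V) (s : Finset V) : Prop :=
  ∀ u ∈ s, ∀ v ∈ s, ¬ G.Adj u v

lemma neg_mem_tri {x : ℤ} (hx : x ∈ ({-1, 0, 1} : Set ℤ)) :
    -x ∈ ({-1, 0, 1} : Set ℤ) := by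
  simp only [Set.mem_insert_iff, Set.mem_singleton_iff] at hx ⊢
  omega

section Aux

variable {V : Type*} (G : SimpleGraph V)

/-- In an acyclic graph, any nonempty finite set of vertices contains a vertex with at most
one neighbor inside the set. -/
lemma exists_low_degree_vertex (hG : G.IsAcyclic) {A : Finset V} (hA : A.Nonempty) :
    ∃ v ∈ A, (A.filter (G.Adj v)).card ≤ 1 := by
  classical
  set S : ℕ → Prop := fun n => ∃ (u w : V) (p : G.Walk u w),
      p.IsPath ∧ (∀ x ∈ p.support, x ∈ A) ∧ p.length = n with hS
  have hbound : ∀ n, S n → n + 1 ≤ A.card := by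
    rintro n ⟨u, w, p, hp, hsub, rfl⟩
    have h1 : p.support.toFinset.card = p.support.length := by
      rw [List.toFinset_card_of_nodup hp.support_nodup]
    have h2 : p.support.toFinset ⊆ A := by
      intro x hx
      exact hsub x (List.mem_toFinset.mp hx)
    have := Finset.card_le_card h2
    rw [h1, p.length_support] at this
    exact this
  obtain ⟨a, ha⟩ := hA
  have hS0 : S 0 := ⟨a, a, SimpleGraph.Walk.nil, by simp, by simpa using ha, rfl⟩
  set k := Nat.findGreatest S A.card with hk
  have hSk : S k := Nat.findGreatest_spec (Nat.zero_le _) hS0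
  obtain ⟨u, w, p, hp, hsub, hlen⟩ := hSk
  refine ⟨u, hsub u p.start_mem_support, ?_⟩
  -- every neighbor of `u` inside `A` is in the support of `p`
  have hnbr : ∀ y ∈ A, G.Adj u y → y ∈ p.support := by
    intro y hy hadj
    by_contra hns
    have hq : S (k + 1) := by
      refine ⟨y, w, SimpleGraph.Walk.cons hadj.symm p, ?_, ?_, by simp [hlen]⟩
      · rw [SimpleGraph.Walk.cons_isPath_iff]; exact ⟨hp, hns⟩
      · intro x hx
        rw [SimpleGraph.Walk.support_cons, List.mem_cons] at hx
        rcases hx with rfl | hx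
        · exact hy
        · exact hsub x hx
    have hle : k + 1 ≤ A.card := by
      have := hbound (k + 1) hq
      omega
    have := Nat.le_findGreatest hle hq
    omega
  cases p with
  | nil =>
    -- no neighbors at all
    have : A.filter (G.Adj u) = ∅ := by
      rw [Finset.filter_eq_empty_iff]
      intro y hy hadj
      have := hnbr y hy hadj
      simp only [SimpleGraph.Walk.support_nil, List.mem_singleton] at this
      exact G.irrefl (this ▸ hadj)
    simp [this]
  | @cons _ b _ h q =>
    -- every neighbor of `u` in `A` equals `b`
    rw [SimpleGraph.Walk.cons_isPath_iff] at hp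
    have key : ∀ y ∈ A.filter (G.Adj u), y = b := by
      intro y hy
      rw [Finset.mem_filter] at hy
      obtain ⟨hyA, hadj⟩ := hy
      have hysup : y ∈ (SimpleGraph.Walk.cons h q).support := hnbr y hyA hadj
      set q0 := (SimpleGraph.Walk.cons h q).takeUntil y hysup with hq0
      have hq0path : q0.IsPath := by
        have : (SimpleGraph.Walk.cons h q).IsPath := by
          rw [SimpleGraph.Walk.cons_isPath_iff]; exact hp
        exact this.takeUntil hysup
      have hedge : s(y, u) ∈ q0.edges := by
        by_contra hne
        have hcyc : (SimpleGraph.Walk.cons hadj.symm (⟨q0, hq0path⟩ : G.Path u y).val).IsCycle :=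
          SimpleGraph.Path.cons_isCycle ⟨q0, hq0path⟩ hadj.symm hne
        exact hG _ hcyc
      have hedge' : s(y, u) ∈ (SimpleGraph.Walk.cons h q).edges :=
        (SimpleGraph.Walk.edges_takeUntil_subset _ hysup) hedge
      rw [SimpleGraph.Walk.edges_cons, List.mem_cons] at hedge'
      rcases hedge' with heq | hmem
      · rw [Sym2.eq_iff] at heq
        rcases heq with ⟨rfl, rfl⟩ | ⟨h1, h2⟩
        · exact absurd hadj (G.irrefl)
        · exact h1
      · exfalso
        have : u ∈ q.support := q.snd_mem_support_of_mem_edges hmem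
        exact hp.2 this
    have : A.filter (G.Adj u) ⊆ {b} := by
      intro y hy
      rw [Finset.mem_singleton]
      exact key y hy
    calc (A.filter (G.Adj u)).card ≤ ({b} : Finset V).card := Finset.card_le_card this
      _ = 1 := Finset.card_singleton b

/-- The sum `∑_{s ⊆ A independent} (-1)^{|s|}`. -/
noncomputable def findep (A : Finset V) : ℤ :=
  ∑ s ∈ A.powerset.filter G.IsIndep, (-1 : ℤ) ^ s.card

lemma isIndep_subset {s t : Finset V} (hst : s ⊆ t) (ht : G.IsIndep t) : G.IsIndep s :=
  fun u hu v hv => ht u (hst hu) v (hst hv)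

lemma findep_empty : findep G (∅ : Finset V) = 1 := by
  have h : (∅ : Finset V).powerset.filter G.IsIndep = {∅} := by
    ext s
    simp only [Finset.mem_filter, Finset.mem_powerset, Finset.subset_empty,
      Finset.mem_singleton]
    constructor
    · rintro ⟨rfl, _⟩; rfl
    · rintro rfl
      exact ⟨rfl, fun u hu => absurd hu (Finset.notMem_empty u)⟩
  rw [findep, h]
  simp

lemma findep_split {A : Finset V} {v : V} (hv : v ∈ A) :
    findep G A = findep G (A.erase v)
      - findep G ((A.erase v).filter (fun u => ¬ G.Adj v u)) := by
  classical
  set B := (A.erase v).filter (fun u => ¬ G.Adj v u) with hB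
  have hsplit := Finset.sum_filter_add_sum_filter_not (A.powerset.filter G.IsIndep)
    (fun s => v ∈ s) (fun s => (-1 : ℤ) ^ s.card)
  have h1 : (A.powerset.filter G.IsIndep).filter (fun s => ¬ v ∈ s)
      = (A.erase v).powerset.filter G.IsIndep := by
    ext s
    simp only [Finset.mem_filter, Finset.mem_powerset, Finset.subset_erase]
    tauto
  have h2 : ∑ s ∈ (A.powerset.filter G.IsIndep).filter (fun s => v ∈ s),
      (-1 : ℤ) ^ s.card = ∑ t ∈ B.powerset.filter G.IsIndep, -((-1 : ℤ) ^ t.card) := by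
    refine Finset.sum_nbij' (fun s => s.erase v) (fun t => insert v t) ?_ ?_ ?_ ?_ ?_
    · intro s hs
      simp only [Finset.mem_filter, Finset.mem_powerset] at hs ⊢
      obtain ⟨⟨hsA, hsInd⟩, hvs⟩ := hs
      refine ⟨?_, isIndep_subset G (Finset.erase_subset v s) hsInd⟩
      intro u hu
      rw [Finset.mem_erase] at hu
      rw [hB, Finset.mem_filter, Finset.mem_erase]
      exact ⟨⟨hu.1, hsA hu.2⟩, hsInd v hvs u hu.2⟩
    · intro t ht
      simp only [Finset.mem_filter, Finset.mem_powerset] at ht ⊢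
      obtain ⟨htB, htInd⟩ := ht
      have hvt : v ∉ t := by
        intro hvt
        have := htB hvt
        rw [hB, Finset.mem_filter, Finset.mem_erase] at this
        exact this.1.1 rfl
      have htA : t ⊆ A.erase v := fun x hx => (Finset.mem_filter.mp (htB hx)).1
      refine ⟨⟨?_, ?_⟩, Finset.mem_insert_self v t⟩
      · intro x hx
        rw [Finset.mem_insert] at hx
        rcases hx with rfl | hx
        · exact hv
        · exact (Finset.erase_subset v A) (htA hx)
      · intro a ha b hb
        rw [Finset.mem_insert] at ha hb
        have hnot : ∀ x ∈ t, ¬ G.Adj v x := by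
          intro x hx
          exact (Finset.mem_filter.mp (htB hx)).2
        rcases ha with rfl | ha <;> rcases hb with rfl | hb
        · exact G.irrefl
        · exact hnot b hb
        · intro hadj; exact hnot a ha hadj.symm
        · exact htInd a ha b hb
    · intro s hs
      simp only [Finset.mem_filter] at hs
      exact Finset.insert_erase hs.2
    · intro t ht
      simp only [Finset.mem_filter, Finset.mem_powerset] at ht
      have hvt : v ∉ t := by
        intro hvt
        have := ht.1 hvt
        rw [hB, Finset.mem_filter, Finset.mem_erase] at this
        exact this.1.1 rfl
      exact Finset.erase_insert hvt
    · intro s hs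
      simp only [Finset.mem_filter] at hs
      have : s.card = (s.erase v).card + 1 := by
        rw [Finset.card_erase_of_mem hs.2]
        have : 1 ≤ s.card := Finset.card_pos.mpr ⟨v, hs.2⟩
        omega
      rw [this, pow_succ]
      ring
  rw [findep, ← hsplit, h1, h2, Finset.sum_neg_distrib]
  rw [findep, findep]
  ring

lemma findep_isolated {A : Finset V} {v : V} (hv : v ∈ A)
    (hiso : ∀ w ∈ A, ¬ G.Adj v w) : findep G A = 0 := by
  have hB : (A.erase v).filter (fun u => ¬ G.Adj v u) = A.erase v := by
    apply Finset.filter_true_of_mem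
    intro x hx
    exact hiso x (Finset.mem_of_mem_erase hx)
  rw [findep_split G hv, hB, sub_self]

lemma findep_mem (hG : G.IsAcyclic) (A : Finset V) :
    findep G A ∈ ({-1, 0, 1} : Set ℤ) := by
  classical
  induction A using Finset.strongInduction with
  | _ A ih =>
    rcases A.eq_empty_or_nonempty with rfl | hA
    · rw [findep_empty]
      norm_num
    · obtain ⟨v, hv, hdeg⟩ := exists_low_degree_vertex G hG hA
      interval_cases h : (A.filter (G.Adj v)).card
      · -- isolated vertex
        have hiso : ∀ w ∈ A, ¬ G.Adj v w := by
          intro w hw hadj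
          have : w ∈ A.filter (G.Adj v) := Finset.mem_filter.mpr ⟨hw, hadj⟩
          rw [Finset.card_eq_zero.mp h] at this
          exact absurd this (Finset.notMem_empty w)
        rw [findep_isolated G hv hiso]
        norm_num
      · -- leaf: unique neighbor u
        obtain ⟨u, hu⟩ := Finset.card_eq_one.mp h
        have huA : u ∈ A ∧ G.Adj v u := by
          have : u ∈ A.filter (G.Adj v) := hu ▸ Finset.mem_singleton_self u
          exact Finset.mem_filter.mp this
        have hvu : v ≠ u := huA.2.ne
        have hsplit := findep_split G huA.1
        have hzero : findep G (A.erase u) = 0 := by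
          apply findep_isolated G (v := v)
          · exact Finset.mem_erase.mpr ⟨hvu, hv⟩
          · intro w hw hadj
            rw [Finset.mem_erase] at hw
            have : w ∈ A.filter (G.Adj v) := Finset.mem_filter.mpr ⟨hw.2, hadj⟩
            rw [hu, Finset.mem_singleton] at this
            exact hw.1 this
        rw [hzero, zero_sub] at hsplit
        set B := (A.erase u).filter (fun x => ¬ G.Adj u x) with hBdef
        have hBsub : B ⊂ A :=
          Finset.ssubset_of_subset_of_ssubset (Finset.filter_subset _ _)
            (Finset.erase_ssubset huA.1)
        have hB3 := ih B hBsub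
        rw [hsplit]
        exact neg_mem_tri hB3

end Aux

/-- If `G` is a forest, the reduced Euler characteristic of its independence complex,
`χ̃ = ∑_i (-1)^(i-1) f_i = -∑_{σ independent} (-1)^{|σ|}`, lies in `{-1, 0, 1}`. -/
theorem reduced_euler_char_indep_complex_forest {V : Type*} [Fintype V]
    (G : SimpleGraph V) (hG : G.IsAcyclic) :
    (-∑ s ∈ Finset.univ.filter G.IsIndep, (-1 : ℤ) ^ s.card) ∈ ({-1, 0, 1} : Set ℤ) := by
  have h : findep G (Finset.univ : Finset V)
      = ∑ s ∈ Finset.univ.filter G.IsIndep, (-1 : ℤ) ^ s.card := by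
    rw [findep, Finset.powerset_univ]
  rw [← h]
  exact neg_mem_tri (findep_mem G hG Finset.univ)
end

section
/- Let G be a graph with two distinct vertices u and v with N(u) ⊆ N(v). Then the number of independent sets of G containing v that contain u equals the number of independent sets of G containing v that do not contain u; consequently Σ_{σ independent in G} (-1)^{|σ|} = Σ_{σ independent in G \ v} (-1)^{|σ|}. -/
open Finset

attribute [local instance] Classical.propDecidable

/-- If `u ≠ v` and `N(u) ⊆ N(v)`, then the independent sets of `G` containing `v` and
`u` are equinumerous with those containing `v` but not `u`; consequently
`∑_{σ indep in G} (-1)^{|σ|} = ∑_{σ indep in G \ v} (-1)^{|σ|}`. -/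
theorem fold_counting {V : Type*} [Fintype V] (G : SimpleGraph V) (u v : V)
    (huv : u ≠ v) (h : G.neighborSet u ⊆ G.neighborSet v) :
    ((Finset.univ.filter (fun s => G.IsIndep s ∧ v ∈ s ∧ u ∈ s)).card
        = (Finset.univ.filter (fun s => G.IsIndep s ∧ v ∈ s ∧ u ∉ s)).card)
      ∧ ∑ s ∈ Finset.univ.filter G.IsIndep, (-1 : ℤ) ^ s.card
          = ∑ s ∈ Finset.univ.filter (fun s => G.IsIndep s ∧ v ∉ s), (-1 : ℤ) ^ s.card := by
  classical
  have indep_mono : ∀ {s t : Finset V}, s ⊆ t → G.IsIndep t → G.IsIndep s :=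
    fun hst ht a ha b hb => ht a (hst ha) b (hst hb)
  have insert_indep : ∀ s : Finset V, G.IsIndep s → v ∈ s → G.IsIndep (insert u s) := by
    intro s hs hv a ha b hb hab
    simp only [mem_insert] at ha hb
    rcases ha with rfl | ha <;> rcases hb with rfl | hb
    · exact G.loopless.irrefl _ hab
    · exact hs v hv b hb (h hab)
    · exact hs v hv a ha (h (G.symm.symm _ _ hab))
    · exact hs a ha b hb hab
  -- membership facts for the bijection
  have hAB : ∀ s ∈ Finset.univ.filter (fun s => G.IsIndep s ∧ v ∈ s ∧ u ∈ s),
      s.erase u ∈ Finset.univ.filter (fun s => G.IsIndep s ∧ v ∈ s ∧ u ∉ s) := by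
    intro s hs
    simp only [mem_filter, mem_univ, true_and] at hs ⊢
    exact ⟨indep_mono (erase_subset _ _) hs.1,
      mem_erase.2 ⟨(Ne.symm huv), hs.2.1⟩, notMem_erase _ _⟩
  have hBA : ∀ s ∈ Finset.univ.filter (fun s => G.IsIndep s ∧ v ∈ s ∧ u ∉ s),
      insert u s ∈ Finset.univ.filter (fun s => G.IsIndep s ∧ v ∈ s ∧ u ∈ s) := by
    intro s hs
    simp only [mem_filter, mem_univ, true_and] at hs ⊢
    exact ⟨insert_indep s hs.1 hs.2.1, mem_insert_of_mem hs.2.1, mem_insert_self _ _⟩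
  have hABA : ∀ s ∈ Finset.univ.filter (fun s => G.IsIndep s ∧ v ∈ s ∧ u ∈ s),
      insert u (s.erase u) = s := by
    intro s hs
    simp only [mem_filter, mem_univ, true_and] at hs
    exact insert_erase hs.2.2
  have hBAB : ∀ s ∈ Finset.univ.filter (fun s => G.IsIndep s ∧ v ∈ s ∧ u ∉ s),
      (insert u s).erase u = s := by
    intro s hs
    simp only [mem_filter, mem_univ, true_and] at hs
    exact erase_insert hs.2.2
  have hcard :
      (Finset.univ.filter (fun s => G.IsIndep s ∧ v ∈ s ∧ u ∈ s)).card
        = (Finset.univ.filter (fun s => G.IsIndep s ∧ v ∈ s ∧ u ∉ s)).card :=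
    Finset.card_bij' (fun s _ => s.erase u) (fun s _ => insert u s) hAB hBA hABA hBAB
  refine ⟨hcard, ?_⟩
  -- split the full sum by membership of v
  have hsplit := Finset.sum_filter_add_sum_filter_not (Finset.univ.filter G.IsIndep)
    (fun s => v ∈ s) (fun s : Finset V => (-1 : ℤ) ^ s.card)
  rw [Finset.filter_filter, Finset.filter_filter] at hsplit
  -- the part with v ∈ s vanishes
  have hzero : ∑ s ∈ Finset.univ.filter (fun s => G.IsIndep s ∧ v ∈ s),
      (-1 : ℤ) ^ s.card = 0 := by
    have hsplit2 := Finset.sum_filter_add_sum_filter_not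
      (Finset.univ.filter (fun s => G.IsIndep s ∧ v ∈ s))
      (fun s => u ∈ s) (fun s : Finset V => (-1 : ℤ) ^ s.card)
    rw [Finset.filter_filter, Finset.filter_filter] at hsplit2
    simp only [and_assoc] at hsplit2
    have hneg : ∑ s ∈ Finset.univ.filter (fun s => G.IsIndep s ∧ v ∈ s ∧ u ∈ s),
        (-1 : ℤ) ^ s.card
        = -∑ s ∈ Finset.univ.filter (fun s => G.IsIndep s ∧ v ∈ s ∧ u ∉ s),
            (-1 : ℤ) ^ s.card := by
      rw [← Finset.sum_neg_distrib]
      refine Finset.sum_nbij' (fun s => s.erase u) (fun s => insert u s)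
        hAB hBA hABA hBAB ?_
      intro s hs
      simp only [mem_filter, mem_univ, true_and] at hs
      have : s.card = (s.erase u).card + 1 :=
        (Finset.card_erase_add_one hs.2.2).symm
      rw [this, pow_succ]
      ring
    rw [hneg] at hsplit2
    linarith [hsplit2]
  rw [← hsplit, hzero]
  ring
end

section
/- If G is a forest, then the alternating sum Σ_{σ} (-1)^{|σ|}, taken over all independent sets σ of G (including the empty set), lies in {-1, 0, 1}. -/
open Finset

attribute [local instance] Classical.propDecidable

section Aux

variable {V : Type*} [Fintype V] (G : SimpleGraph V)

/-- In a finite acyclic graph, if every vertex of a nonempty set `A` has a neighbor in `A`,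
then `A` contains a vertex with a unique neighbor in `A`. -/
lemma exists_leaf_aux (hG : G.IsAcyclic) (A : Finset V) (hA : A.Nonempty)
    (hnb : ∀ v ∈ A, ∃ u ∈ A, G.Adj v u) :
    ∃ v ∈ A, ∃ u ∈ A, G.Adj v u ∧ ∀ x ∈ A, G.Adj v x → x = u := by
  classical
  set P : ℕ → Prop := fun n =>
    ∃ (v w : V) (p : G.Walk v w), p.IsPath ∧ (∀ y ∈ p.support, y ∈ A) ∧ p.length = n with hP
  -- P 1 holds
  obtain ⟨v0, hv0⟩ := hA
  obtain ⟨u0, hu0A, hadj0⟩ := hnb v0 hv0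
  have hP1 : P 1 := by
    refine ⟨v0, u0, SimpleGraph.Walk.cons hadj0 SimpleGraph.Walk.nil, ?_, ?_, rfl⟩
    · simp [SimpleGraph.Walk.cons_isPath_iff, hadj0.ne]
    · intro y hy
      simp only [SimpleGraph.Walk.support_cons, SimpleGraph.Walk.support_nil,
        List.mem_cons, List.mem_singleton] at hy
      rcases hy with rfl | hy
      · exact hv0
      · simp at hy; subst hy; exact hu0A
  -- P is bounded by Fintype.card V
  have hbdd : ∀ m, P m → m ≤ Fintype.card V := by
    rintro m ⟨v, w, p, hp, -, rfl⟩
    exact le_of_lt hp.length_lt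
  set n := Nat.findGreatest P (Fintype.card V) with hn
  have hPn : P n := Nat.findGreatest_spec (hbdd 1 hP1) hP1
  have hmax : ∀ m, P m → m ≤ n := fun m hm => Nat.le_findGreatest (hbdd m hm) hm
  obtain ⟨v, w, p, hp, hsupp, hlen⟩ := hPn
  have hvA : v ∈ A := hsupp v p.start_mem_support
  -- every neighbor of `v` inside A must be `p.getVert 1`
  have hkey : ∀ x ∈ A, G.Adj v x → x = p.getVert 1 := by
    intro x hxA hadj
    have hxsupp : x ∈ p.support := by
      by_contra hxs
      have hq : (p.cons hadj.symm).IsPath := hp.cons hxs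
      have : p.length + 1 ≤ n := by
        refine hmax _ ⟨x, w, p.cons hadj.symm, hq, ?_, by simp⟩
        intro y hy
        simp only [SimpleGraph.Walk.support_cons, List.mem_cons] at hy
        rcases hy with rfl | hy
        · exact hxA
        · exact hsupp y hy
      omega
    -- the path v → x inside p must be the single edge
    have hsingle : (⟨p.takeUntil x hxsupp, hp.takeUntil hxsupp⟩ : G.Path v x) =
        ⟨SimpleGraph.Walk.cons hadj SimpleGraph.Walk.nil, by
          simp [SimpleGraph.Walk.cons_isPath_iff, hadj.ne]⟩ :=
      hG.path_unique _ _
    have hwalk : p.takeUntil x hxsupp = SimpleGraph.Walk.cons hadj SimpleGraph.Walk.nil :=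
      congrArg Subtype.val hsingle
    have hspec := p.take_spec hxsupp
    rw [hwalk] at hspec
    rw [← hspec]
    simp
  obtain ⟨u, huA, hadju⟩ := hnb v hvA
  have hu : u = p.getVert 1 := hkey u huA hadju
  exact ⟨v, hvA, u, huA, hadju, fun x hxA hadj => (hkey x hxA hadj).trans hu.symm⟩

/-- Pairing lemma: if `S` is closed under toggling `v`, the alternating sum over `S` is `0`. -/
lemma toggle_sum_zero (v : V) (S : Finset (Finset V))
    (hcl : ∀ σ ∈ S, (if v ∈ σ then σ.erase v else insert v σ) ∈ S) :
    (∑ s ∈ S, (-1 : ℤ) ^ s.card) = 0 := by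
  classical
  refine Finset.sum_involution (fun σ _ => if v ∈ σ then σ.erase v else insert v σ)
    ?_ ?_ (fun σ hσ => hcl σ hσ) ?_
  · intro σ hσ
    by_cases hv : v ∈ σ
    · obtain ⟨m, hm⟩ : ∃ m, σ.card = m + 1 :=
        ⟨σ.card - 1, by have : 1 ≤ σ.card := Finset.card_pos.mpr ⟨v, hv⟩; omega⟩
      simp only [hv, if_true, Finset.card_erase_of_mem hv, hm, Nat.add_sub_cancel, pow_succ]
      ring
    · simp only [hv, if_false, Finset.card_insert_of_notMem hv, pow_succ]
      ring
  · intro σ hσ _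
    by_cases hv : v ∈ σ
    · simp only [hv, if_true]
      intro h
      exact (h ▸ Finset.notMem_erase v σ) hv
    · simp only [hv, if_false]
      intro h
      exact hv (h ▸ Finset.mem_insert_self v σ)
  · intro σ hσ
    by_cases hv : v ∈ σ
    · simp [hv, Finset.insert_erase hv, Finset.notMem_erase]
    · simp [hv, Finset.erase_insert hv]

lemma indep_subset {s t : Finset V} (h : G.IsIndep t) (hst : s ⊆ t) : G.IsIndep s :=
  fun u hu v hv => h u (hst hu) v (hst hv)

lemma indep_insert {u : V} {τ : Finset V} (h : G.IsIndep τ)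
    (hnb : ∀ x ∈ τ, ¬ G.Adj u x) : G.IsIndep (insert u τ) := by
  intro a ha b hb hab
  rcases Finset.mem_insert.mp ha with hau | ha <;> rcases Finset.mem_insert.mp hb with hbu | hb
  · rw [hau, hbu] at hab; exact G.irrefl hab
  · rw [hau] at hab; exact hnb b hb hab
  · rw [hbu] at hab; exact hnb a ha hab.symm
  · exact h a ha b hb hab

lemma main_aux (hG : G.IsAcyclic) :
    ∀ A : Finset V,
      (∑ s ∈ A.powerset.filter G.IsIndep, (-1 : ℤ) ^ s.card) ∈ ({-1, 0, 1} : Set ℤ) := by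
  classical
  intro A
  induction A using Finset.strongInduction with
  | H A ih =>
    rcases A.eq_empty_or_nonempty with rfl | hA
    · have hempty : G.IsIndep (∅ : Finset V) := by intro u hu; simp at hu
      simp [Finset.powerset_empty, Finset.filter_singleton, hempty]
    by_cases hiso : ∃ v ∈ A, ∀ x ∈ A, ¬ G.Adj v x
    · -- isolated vertex : sum is 0
      obtain ⟨v, hvA, hv⟩ := hiso
      simp only [Set.mem_insert_iff, Set.mem_singleton_iff]
      refine Or.inr (Or.inl ?_)
      refine toggle_sum_zero v _ ?_
      intro σ hσ
      simp only [Finset.mem_filter, Finset.mem_powerset] at hσ ⊢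
      obtain ⟨hσA, hσI⟩ := hσ
      by_cases hvσ : v ∈ σ
      · simp only [hvσ, if_true]
        exact ⟨(Finset.erase_subset v σ).trans hσA, indep_subset G hσI (Finset.erase_subset v σ)⟩
      · simp only [hvσ, if_false]
        exact ⟨Finset.insert_subset hvA hσA,
          indep_insert G hσI (fun x hx => hv x (hσA hx))⟩
    · push_neg at hiso
      obtain ⟨v, hvA, u, huA, hadj, huniq⟩ := exists_leaf_aux G hG A hA hiso
      have hvu : v ≠ u := hadj.ne
      -- split the sum according to whether u ∈ σ
      have hsplit :
          (∑ s ∈ A.powerset.filter G.IsIndep, (-1 : ℤ) ^ s.card) =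
            (∑ s ∈ (A.powerset.filter G.IsIndep).filter (fun σ => u ∈ σ), (-1 : ℤ) ^ s.card) +
            (∑ s ∈ (A.powerset.filter G.IsIndep).filter (fun σ => u ∉ σ), (-1 : ℤ) ^ s.card) :=
        (Finset.sum_filter_add_sum_filter_not _ _ _).symm
      -- the part with u ∉ σ cancels by toggling v
      have hzero :
          (∑ s ∈ (A.powerset.filter G.IsIndep).filter (fun σ => u ∉ σ), (-1 : ℤ) ^ s.card) = 0 := by
        refine toggle_sum_zero v _ ?_
        intro σ hσ
        simp only [Finset.mem_filter, Finset.mem_powerset] at hσ ⊢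
        obtain ⟨⟨hσA, hσI⟩, huσ⟩ := hσ
        by_cases hvσ : v ∈ σ
        · simp only [hvσ, if_true]
          exact ⟨⟨(Finset.erase_subset v σ).trans hσA,
            indep_subset G hσI (Finset.erase_subset v σ)⟩,
            fun h => huσ (Finset.mem_of_mem_erase h)⟩
        · simp only [hvσ, if_false]
          refine ⟨⟨Finset.insert_subset hvA hσA, ?_⟩, ?_⟩
          · refine indep_insert G hσI ?_
            intro x hx hax
            exact huσ (huniq x (hσA hx) hax ▸ hx)
          · intro h
            rcases Finset.mem_insert.mp h with h | h
            · exact hvu h.symm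
            · exact huσ h
      -- the part with u ∈ σ equals - (sum over the smaller set B)
      set B : Finset V := (A.erase u).filter (fun x => ¬ G.Adj u x) with hB
      have hBA : B ⊂ A := by
        constructor
        · intro x hx
          simp only [hB, Finset.mem_filter, Finset.mem_erase] at hx
          exact hx.1.2
        · intro hcontra
          have : u ∈ B := hcontra huA
          simp [hB, Finset.mem_filter, Finset.mem_erase] at this
      have hbij :
          (∑ s ∈ (A.powerset.filter G.IsIndep).filter (fun σ => u ∈ σ), (-1 : ℤ) ^ s.card) =
            - (∑ s ∈ B.powerset.filter G.IsIndep, (-1 : ℤ) ^ s.card) := by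
        rw [← Finset.sum_neg_distrib]
        refine Finset.sum_bij' (fun σ _ => σ.erase u) (fun τ _ => insert u τ) ?_ ?_ ?_ ?_ ?_
        · intro σ hσ
          simp only [Finset.mem_filter, Finset.mem_powerset] at hσ ⊢
          obtain ⟨⟨hσA, hσI⟩, huσ⟩ := hσ
          refine ⟨?_, indep_subset G hσI (Finset.erase_subset u σ)⟩
          intro x hx
          obtain ⟨hxu, hxσ⟩ := Finset.mem_erase.mp hx
          simp only [hB, Finset.mem_filter, Finset.mem_erase]
          exact ⟨⟨hxu, hσA hxσ⟩, hσI u huσ x hxσ⟩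
        · intro τ hτ
          simp only [Finset.mem_filter, Finset.mem_powerset] at hτ ⊢
          obtain ⟨hτB, hτI⟩ := hτ
          have huτ : u ∉ τ := fun h => by
            have := hτB h
            simp [hB, Finset.mem_filter, Finset.mem_erase] at this
          refine ⟨⟨?_, ?_⟩, Finset.mem_insert_self u τ⟩
          · refine Finset.insert_subset huA ?_
            intro x hx
            have := hτB hx
            simp only [hB, Finset.mem_filter, Finset.mem_erase] at this
            exact this.1.2
          · refine indep_insert G hτI ?_
            intro x hx hux
            have := hτB hx
            simp only [hB, Finset.mem_filter, Finset.mem_erase] at this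
            exact this.2 hux
        · intro σ hσ
          simp only [Finset.mem_filter] at hσ
          exact Finset.insert_erase hσ.2
        · intro τ hτ
          simp only [Finset.mem_filter, Finset.mem_powerset] at hτ
          have huτ : u ∉ τ := fun h => by
            have := hτ.1 h
            simp [hB, Finset.mem_filter, Finset.mem_erase] at this
          exact Finset.erase_insert huτ
        · intro σ hσ
          simp only [Finset.mem_filter] at hσ
          have hcard : σ.card = (σ.erase u).card + 1 := by
            rw [Finset.card_erase_of_mem hσ.2]
            have : 1 ≤ σ.card := Finset.card_pos.mpr ⟨u, hσ.2⟩
            omega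
          rw [hcard, pow_succ]
          ring
      rw [hsplit, hzero, hbij, add_zero]
      have := ih B hBA
      simp only [Set.mem_insert_iff, Set.mem_singleton_iff] at this ⊢
      rcases this with h | h | h <;> simp [h]

end Aux

/-- If `G` is a forest, the alternating sum `∑_{σ independent} (-1)^{|σ|}`
(over all independent sets including `∅`) lies in `{-1, 0, 1}`. -/
theorem alternating_sum_indep_forest {V : Type*} [Fintype V]
    (G : SimpleGraph V) (hG : G.IsAcyclic) :
    (∑ s ∈ Finset.univ.filter G.IsIndep, (-1 : ℤ) ^ s.card) ∈ ({-1, 0, 1} : Set ℤ) := by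
  have h := main_aux G hG Finset.univ
  rwa [Finset.powerset_univ] at h
end

section
/- For any finite graph G, |χ̃(Ind(G))| ≤ 2^{φ(G)}, where φ(G) is the decycling number of G, the minimum number of vertices whose deletion makes G a forest. -/
open Finset SimpleGraph

attribute [local instance] Classical.propDecidable

lemma exists_leaf {W : Type*} [Fintype W] [Nonempty W] (H : SimpleGraph W)
    (hac : H.IsAcyclic) (hdeg : ∀ v : W, ∃ w, H.Adj v w) :
    ∃ v w : W, H.Adj v w ∧ ∀ x, H.Adj v x → x = w := by
  classical
  set S : Set ℕ := {n | ∃ (a b : W) (p : H.Walk a b), p.IsPath ∧ p.length = n} with hS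
  have h1 : (1 : ℕ) ∈ S := by
    obtain ⟨a⟩ := ‹Nonempty W›
    obtain ⟨b, hab⟩ := hdeg a
    exact ⟨a, b, (SimpleGraph.Path.singleton hab).1, (SimpleGraph.Path.singleton hab).2, rfl⟩
  have hbdd : BddAbove S := by
    refine ⟨Fintype.card W, ?_⟩
    rintro n ⟨a, b, p, hp, rfl⟩
    exact (hp.length_lt).le
  have hmem : sSup S ∈ S := Nat.sSup_mem ⟨1, h1⟩ hbdd
  obtain ⟨a, b, p, hp, hlen⟩ := hmem
  have hpos : 1 ≤ p.length := hlen.symm ▸ le_csSup hbdd h1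
  cases p with
  | nil => simp at hpos
  | @cons _ c _ h q =>
    refine ⟨a, c, h, fun x hax => ?_⟩
    by_cases hx : x ∈ (SimpleGraph.Walk.cons h q).support
    · -- two paths from a to x must coincide
      by_contra hxc
      have hx' : x ∈ q.support := by
        have : x = a ∨ x ∈ q.support := by simpa using hx
        exact this.resolve_left hax.ne'
      have hP2 : ((SimpleGraph.Walk.cons h q).takeUntil x hx).IsPath := hp.takeUntil hx
      have := isAcyclic_iff_path_unique.1 hac (SimpleGraph.Path.singleton hax)
        ⟨(SimpleGraph.Walk.cons h q).takeUntil x hx, hP2⟩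
      have hwalk : SimpleGraph.Walk.cons hax SimpleGraph.Walk.nil
          = (SimpleGraph.Walk.cons h q).takeUntil x hx := congrArg Subtype.val this
      have hspec := (SimpleGraph.Walk.cons h q).take_spec hx
      rw [← hwalk] at hspec
      -- hspec : (cons hax nil).append d = cons h q
      have hsupp := congrArg SimpleGraph.Walk.support hspec
      rw [SimpleGraph.Walk.support_append] at hsupp
      -- support (cons hax nil) = [a, x]; tail of support d
      set d := (SimpleGraph.Walk.cons h q).dropUntil x hx with hd
      have : ([a, x] : List W) ++ d.support.tail = a :: q.support := by
        simpa using hsupp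
      have : x :: d.support.tail = q.support := by
        simpa using congrArg List.tail this
      have hx2 : q.support = c :: q.support.tail := q.support_eq_cons
      rw [hx2] at this
      exact hxc (List.head_eq_of_cons_eq this)
    · -- extend the path, contradicting maximality
      have hext : (SimpleGraph.Walk.cons hax.symm (SimpleGraph.Walk.cons h q)).IsPath :=
        hp.cons hx
      have : (SimpleGraph.Walk.cons hax.symm (SimpleGraph.Walk.cons h q)).length ∈ S :=
        ⟨x, b, _, hext, rfl⟩
      have hle := le_csSup hbdd this
      rw [SimpleGraph.Walk.length_cons] at hlen
      simp only [SimpleGraph.Walk.length_cons] at hle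
      omega

section Aux

open SimpleGraph

variable {V : Type*} [Fintype V] (G : SimpleGraph V)

set_option linter.unusedSectionVars false


noncomputable def eSum (A : Finset V) : ℤ :=
  ∑ s ∈ A.powerset.filter G.IsIndep, (-1 : ℤ) ^ s.card

lemma eSum_rec {A : Finset V} {v : V} (hv : v ∈ A) :
    eSum G A = eSum G (A.erase v)
      - eSum G ((A.erase v).filter fun w => ¬ G.Adj v w) := by
  classical
  set B := (A.erase v).filter fun w => ¬ G.Adj v w with hB
  have hsplit := Finset.sum_filter_add_sum_filter_not
    (A.powerset.filter G.IsIndep) (fun s => v ∈ s) (fun s => (-1 : ℤ) ^ s.card)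
  have h1 : ((A.powerset.filter G.IsIndep).filter fun s => v ∉ s)
      = (A.erase v).powerset.filter G.IsIndep := by
    ext s
    simp only [Finset.mem_filter, Finset.mem_powerset, Finset.subset_erase]
    tauto
  have h2 : ∑ s ∈ (A.powerset.filter G.IsIndep).filter (fun s => v ∈ s),
      (-1 : ℤ) ^ s.card = - eSum G B := by
    rw [eSum, ← Finset.sum_neg_distrib]
    refine Finset.sum_bij' (fun s _ => s.erase v) (fun t _ => insert v t) ?_ ?_ ?_ ?_ ?_
    · rintro s hs
      simp only [Finset.mem_filter, Finset.mem_powerset] at hs ⊢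
      obtain ⟨⟨hsA, hind⟩, hvs⟩ := hs
      refine ⟨?_, fun u hu w hw => hind u (Finset.erase_subset _ _ hu) w
        (Finset.erase_subset _ _ hw)⟩
      intro w hw
      rw [hB, Finset.mem_filter, Finset.mem_erase]
      have hwne := (Finset.mem_erase.1 hw).1
      have hws := Finset.erase_subset _ _ hw
      exact ⟨⟨hwne, hsA hws⟩, hind v hvs w hws⟩
    · rintro t ht
      simp only [Finset.mem_filter, Finset.mem_powerset] at ht ⊢
      obtain ⟨htB, hind⟩ := ht
      have htA : t ⊆ A.erase v := htB.trans (Finset.filter_subset _ _)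
      constructor
      · constructor
        · exact Finset.insert_subset hv (htA.trans (Finset.erase_subset _ _))
        · intro u hu w hw hadj
          rcases Finset.mem_insert.1 hu with hu1 | hu2
          · rcases Finset.mem_insert.1 hw with hw1 | hw2
            · rw [hu1, hw1] at hadj; exact G.irrefl hadj
            · rw [hu1] at hadj; exact (Finset.mem_filter.1 (htB hw2)).2 hadj
          · rcases Finset.mem_insert.1 hw with hw1 | hw2
            · rw [hw1] at hadj; exact (Finset.mem_filter.1 (htB hu2)).2 hadj.symm
            · exact hind u hu2 w hw2 hadj
      · exact Finset.mem_insert_self v t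
    · rintro s hs
      simp only [Finset.mem_filter] at hs
      exact Finset.insert_erase hs.2
    · rintro t ht
      simp only [Finset.mem_filter, Finset.mem_powerset] at ht
      have : v ∉ t := fun hvt =>
        (Finset.mem_erase.1 ((ht.1.trans (Finset.filter_subset _ _)) hvt)).1 rfl
      exact Finset.erase_insert this
    · rintro s hs
      simp only [Finset.mem_filter] at hs
      rw [Finset.card_erase_of_mem hs.2]
      obtain ⟨m, hm⟩ : ∃ m, s.card = m + 1 :=
        ⟨s.card - 1, (Nat.succ_pred_eq_of_pos (Finset.card_pos.2 ⟨v, hs.2⟩)).symm⟩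
      rw [hm]
      simp [pow_succ]
  rw [eSum, ← hsplit, h1, h2]
  simp only [eSum]
  ring


lemma eSum_isolated {A : Finset V} {v : V} (hv : v ∈ A)
    (hiso : ∀ w ∈ A, ¬ G.Adj v w) : eSum G A = 0 := by
  have hfe : ((A.erase v).filter fun w => ¬ G.Adj v w) = A.erase v := by
    apply Finset.filter_true_of_mem
    intro w hw
    exact hiso w (Finset.erase_subset _ _ hw)
  rw [eSum_rec G hv, hfe, sub_self]

lemma isAcyclic_induce_mono {s t : Set V} (h : s ⊆ t)
    (hac : (G.induce t).IsAcyclic) : (G.induce s).IsAcyclic := by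
  intro v c hc
  exact hac (c.map (SimpleGraph.induceHomOfLE G h).toHom)
    ((SimpleGraph.Walk.map_isCycle_iff_of_injective
      (SimpleGraph.induceHomOfLE G h).injective).2 hc)

lemma forest_bound : ∀ n (A : Finset V), A.card = n →
    (G.induce (A : Set V)).IsAcyclic → (eSum G A).natAbs ≤ 1 := by
  intro n
  induction n using Nat.strong_induction_on with
  | _ n ih =>
    intro A hcard hac
    rcases Finset.eq_empty_or_nonempty A with rfl | hne
    · have h0 : G.IsIndep ∅ := by intro u hu; simp at hu
      simp [eSum, Finset.powerset_empty, Finset.filter_singleton, h0]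
    · by_cases hiso : ∃ v ∈ A, ∀ w ∈ A, ¬ G.Adj v w
      · obtain ⟨v, hv, hvw⟩ := hiso
        rw [eSum_isolated G hv hvw]
        simp
      · push_neg at hiso
        -- every vertex of A has a neighbour in A
        have hdeg : ∀ v : (A : Set V), ∃ w : (A : Set V), (G.induce (A : Set V)).Adj v w := by
          rintro ⟨v, hv⟩
          obtain ⟨w, hw, hadj⟩ := hiso v hv
          exact ⟨⟨w, hw⟩, hadj⟩
        have : Nonempty (A : Set V) := ⟨⟨hne.choose, hne.choose_spec⟩⟩
        obtain ⟨u, w, huw, huniq⟩ := exists_leaf (G.induce (A : Set V)) hac hdeg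
        -- u is a leaf with unique neighbour w; pivot at w
        have huA : (u : V) ∈ A := u.2
        have hwA : (w : V) ∈ A := w.2
        have hadj : G.Adj u w := huw
        have hne_uw : (u : V) ≠ (w : V) := fun h => G.irrefl (h ▸ hadj)
        rw [eSum_rec G hwA]
        have hzero : eSum G (A.erase (w : V)) = 0 := by
          apply eSum_isolated G (v := (u : V)) (Finset.mem_erase.2 ⟨hne_uw, huA⟩)
          intro x hx hadjx
          have hxA : x ∈ A := Finset.erase_subset _ _ hx
          have : (⟨x, hxA⟩ : (A : Set V)) = w := huniq ⟨x, hxA⟩ hadjx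
          exact (Finset.mem_erase.1 hx).1 (congrArg Subtype.val this)
        rw [hzero, zero_sub, Int.natAbs_neg]
        set B := ((A.erase (w : V)).filter fun x => ¬ G.Adj (w : V) x) with hB
        have hBsub : B ⊆ A := (Finset.filter_subset _ _).trans (Finset.erase_subset _ _)
        have hBlt : B.card < n := by
          rw [← hcard]
          apply Finset.card_lt_card
          refine ⟨hBsub, fun hsub => ?_⟩
          have := hsub hwA
          rw [hB, Finset.mem_filter, Finset.mem_erase] at this
          exact this.1.1 rfl
        exact ih B.card hBlt B rfl
          (isAcyclic_induce_mono G (by exact_mod_cast Finset.coe_subset.2 hBsub) hac)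

lemma key_bound : ∀ (D : Finset V), ∀ (A : Finset V),
    (G.induce ((A : Set V) \ (D : Set V))).IsAcyclic →
    (eSum G A).natAbs ≤ 2 ^ D.card := by
  intro D
  induction D using Finset.induction_on with
  | empty =>
    intro A h
    have he : ((A : Set V) \ (((∅ : Finset V) : Set V))) = (A : Set V) := by simp
    rw [he] at h
    simpa using forest_bound G A.card A rfl h
  | @insert v D hv ih =>
    intro A h
    by_cases hvA : v ∈ A
    · rw [eSum_rec G hvA]
      have hsub1 : ((A.erase v : Finset V) : Set V) \ (D : Set V)
          ⊆ (A : Set V) \ ((insert v D : Finset V) : Set V) := by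
        intro x hx
        simp only [Finset.coe_erase, Set.mem_diff, Set.mem_singleton_iff,
          Finset.coe_insert, Set.mem_insert_iff] at hx ⊢
        tauto
      set B := ((A.erase v).filter fun x => ¬ G.Adj v x) with hB
      have hsub2 : ((B : Finset V) : Set V) \ (D : Set V)
          ⊆ (A : Set V) \ ((insert v D : Finset V) : Set V) := by
        intro x hx
        have hxB : x ∈ B := by exact_mod_cast hx.1
        rw [hB, Finset.mem_filter, Finset.mem_erase] at hxB
        simp only [Set.mem_diff, Finset.coe_insert, Set.mem_insert_iff] at hx ⊢
        exact ⟨hxB.1.2, fun hc => hc.elim (fun h' => hxB.1.1 h') (fun h' => hx.2 h')⟩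
      have h1 := ih (A.erase v) (isAcyclic_induce_mono G hsub1 h)
      have h2 := ih B (isAcyclic_induce_mono G hsub2 h)
      calc (eSum G (A.erase v) - eSum G B).natAbs
          ≤ (eSum G (A.erase v)).natAbs + (eSum G B).natAbs := Int.natAbs_sub_le _ _
        _ ≤ 2 ^ D.card + 2 ^ D.card := Nat.add_le_add h1 h2
        _ = 2 ^ (insert v D).card := by
            rw [Finset.card_insert_of_notMem hv, pow_succ]
            ring
    · have heq : (A : Set V) \ ((insert v D : Finset V) : Set V)
          = (A : Set V) \ (D : Set V) := by
        ext x
        simp only [Set.mem_diff, Finset.coe_insert, Set.mem_insert_iff]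
        constructor
        · rintro ⟨hxA, hnd⟩; exact ⟨hxA, fun hc => hnd (Or.inr hc)⟩
        · rintro ⟨hxA, hnd⟩
          exact ⟨hxA, fun hc => hc.elim (fun h' => hvA (h' ▸ hxA)) hnd⟩
      rw [heq] at h
      calc (eSum G A).natAbs ≤ 2 ^ D.card := ih A h
        _ ≤ 2 ^ (insert v D).card :=
            Nat.pow_le_pow_right (by norm_num) (Finset.card_le_card (Finset.subset_insert _ _))

end Aux

/-- `|χ̃(Ind(G))| ≤ 2^{φ(G)}` where `φ(G)` is the decycling number of `G`: the minimum
size of a vertex set whose deletion leaves a forest.  Here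
`χ̃(Ind(G)) = -∑_{σ indep} (-1)^{|σ|}`, so its absolute value is that of the
alternating sum. -/
theorem abs_euler_char_le_two_pow_decycling {V : Type*} [Fintype V] (G : SimpleGraph V) :
    (∑ s ∈ Finset.univ.filter G.IsIndep, (-1 : ℤ) ^ s.card).natAbs
      ≤ 2 ^ sInf {k : ℕ | ∃ D : Finset V, D.card = k ∧
          (G.induce ((↑D : Set V)ᶜ)).IsAcyclic} := by
  classical
  set S := {k : ℕ | ∃ D : Finset V, D.card = k ∧ (G.induce ((↑D : Set V)ᶜ)).IsAcyclic} with hS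
  have hSne : S.Nonempty := by
    refine ⟨(Finset.univ : Finset V).card, Finset.univ, rfl, ?_⟩
    have he : ((↑(Finset.univ : Finset V) : Set V)ᶜ) = (∅ : Set V) := by simp
    rw [he]
    intro v c
    exact absurd v.2 (Set.notMem_empty _)
  obtain ⟨D, hDcard, hDac⟩ := Nat.sInf_mem hSne
  have hsum : (∑ s ∈ Finset.univ.filter G.IsIndep, (-1 : ℤ) ^ s.card) = eSum G Finset.univ := by
    rw [eSum, Finset.powerset_univ]
  rw [hsum, ← hDcard]
  apply key_bound G D Finset.univ
  have : ((Finset.univ : Finset V) : Set V) \ (D : Set V) = ((↑D : Set V)ᶜ) := by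
    simp [Set.compl_eq_univ_diff]
  rw [this]
  exact hDac
end

section
/- If G is the cycle graph on 3n vertices (n ≥ 1), then |χ̃(Ind(G))| = 2 and the decycling number φ(G) = 1, so the bound |χ̃(Ind(G))| ≤ 2^{φ(G)} is tight. -/
open Finset

attribute [local instance] Classical.propDecidable

lemma acyclic_of_grading {V : Type*} (G : SimpleGraph V) (f : V → ℕ)
    (hinj : Function.Injective f)
    (hadj : ∀ u v, G.Adj u v → f u + 1 = f v ∨ f v + 1 = f u) : G.IsAcyclic := by
  have helper : ∀ v w, G.Adj v w → f v + 1 = f w →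
      ¬(G \ SimpleGraph.fromEdgeSet {s(v, w)}).Reachable v w := by
    intro v w hvw hfvw hreach
    obtain ⟨p⟩ := hreach
    have claim : ∀ {a b : V} (_ : (G \ SimpleGraph.fromEdgeSet {s(v, w)}).Walk a b),
        f a ≤ f v → f b ≤ f v := by
      intro a b p
      induction p with
      | nil => exact id
      | @cons a c b h q ih =>
        intro ha
        apply ih
        have hG : G.Adj a c := h.1
        have hne : s(a, c) ≠ s(v, w) := by
          intro hc
          exact h.2 ⟨hc, hG.ne⟩
        rcases hadj a c hG with hf | hf
        · by_cases hle : f c ≤ f v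
          · exact hle
          · exfalso
            have h1 : f a = f v := by omega
            have h2 : f c = f w := by omega
            have : a = v := hinj h1
            have : c = w := hinj h2
            subst_vars
            exact hne rfl
        · omega
    have := claim p (le_refl _)
    omega
  rw [SimpleGraph.isAcyclic_iff_forall_adj_isBridge]
  intro v w hvw
  rcases hadj v w hvw with hf | hf
  · exact SimpleGraph.isBridge_iff.mpr (helper v w hvw hf)
  · have : s(v, w) = s(w, v) := Sym2.eq_swap
    rw [SimpleGraph.IsBridge, this, ← SimpleGraph.IsBridge]
    exact SimpleGraph.isBridge_iff.mpr (helper w v hvw.symm hf)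

lemma fin_sub_val_eq_one {n : ℕ} (h : 3 ≤ n) (a b : Fin n) :
    ((a - b).val = 1) ↔ (a.val = b.val + 1 ∨ (a.val = 0 ∧ b.val = n - 1)) := by
  rw [Fin.sub_def]
  simp only []
  have ha := a.isLt; have hb := b.isLt
  rcases le_or_gt b.val a.val with hle | hlt
  · have : (n - b.val + a.val) % n = a.val - b.val := by
      have e : n - b.val + a.val = n + (a.val - b.val) := by omega
      rw [e, Nat.add_mod_left, Nat.mod_eq_of_lt (by omega)]
    rw [this]; omega
  · have : (n - b.val + a.val) % n = n - b.val + a.val := Nat.mod_eq_of_lt (by omega)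
    rw [this]; omega

lemma cycle_adj_iff {m : ℕ} (hm : 3 ≤ m) (u v : Fin m) :
    (SimpleGraph.cycleGraph m).Adj u v ↔
      (u.val + 1 = v.val ∨ v.val + 1 = u.val ∨ (u.val = 0 ∧ v.val = m - 1) ∨ (v.val = 0 ∧ u.val = m - 1)) := by
  rw [SimpleGraph.cycleGraph_adj', fin_sub_val_eq_one hm, fin_sub_val_eq_one hm]
  omega

lemma induced_acyclic {m : ℕ} (hm : 3 ≤ m) (z : Fin m) (hz : z.val = 0) :
    ((SimpleGraph.cycleGraph m).induce ((↑({z} : Finset (Fin m)) : Set (Fin m))ᶜ)).IsAcyclic := by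
  apply acyclic_of_grading (f := fun x => x.1.val)
  · intro a b h
    exact Subtype.ext (Fin.val_injective h)
  · rintro ⟨u, hu⟩ ⟨v, hv⟩ huv
    have hu0 : u ≠ z := by simpa using hu
    have hv0 : v ≠ z := by simpa using hv
    have hadj : (SimpleGraph.cycleGraph m).Adj u v := huv
    rcases (cycle_adj_iff hm u v).mp hadj with h | h | h | h
    · exact Or.inl h
    · exact Or.inr h
    · exact absurd (Fin.ext (h.1.trans hz.symm) : u = z) hu0
    · exact absurd (Fin.ext (h.1.trans hz.symm) : v = z) hv0

lemma cycle_not_acyclic {m : ℕ} (hm : 3 ≤ m) : ¬(SimpleGraph.cycleGraph m).IsAcyclic := by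
  intro h
  obtain ⟨j, rfl⟩ : ∃ j, m = j + 3 := ⟨m - 3, by omega⟩
  have htree : (SimpleGraph.cycleGraph (j + 3)).IsTree :=
    ⟨SimpleGraph.cycleGraph_connected, h⟩
  have hcard := htree.card_edgeFinset
  have hsum := (SimpleGraph.cycleGraph (j + 3)).sum_degrees_eq_twice_card_edges
  have hdeg : ∀ v : Fin (j + 3), (SimpleGraph.cycleGraph (j + 3)).degree v = 2 :=
    fun v => SimpleGraph.cycleGraph_degree_three_le
  rw [Finset.sum_congr rfl (fun v _ => hdeg v), Finset.sum_const, Finset.card_univ,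
    Fintype.card_fin, smul_eq_mul] at hsum
  rw [Fintype.card_fin] at hcard
  omega

lemma isAcyclic_of_iso {V W : Type*} {G : SimpleGraph V} {H : SimpleGraph W}
    (e : G ≃g H) (h : H.IsAcyclic) : G.IsAcyclic := by
  intro v c hc
  exact h (c.map e.toHom) (hc.map (by exact e.toEquiv.injective))


/-- no two consecutive naturals -/
def NP (s : Finset ℕ) : Prop := ∀ i ∈ s, i + 1 ∉ s

noncomputable def S (A : Finset ℕ) : ℤ := ∑ s ∈ A.powerset, if NP s then (-1 : ℤ) ^ s.card else 0

noncomputable def P (m : ℕ) : ℤ := S (range m)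

lemma P_zero : P 0 = 1 := by
  simp [P, S, NP]

lemma P_one : P 1 = 0 := by
  have h0 : NP {0} := by intro i hi; simp at hi; subst hi; simp
  rw [P, S, show range 1 = {0} from rfl, show ({0} : Finset ℕ).powerset = {∅, {0}} from rfl]
  rw [Finset.sum_insert (by simp [(Finset.singleton_ne_empty (0:ℕ)).symm])]
  simp [NP, h0]

lemma NP_insert {t : Finset ℕ} {M : ℕ} (hM : 0 < M) (ht : ∀ i ∈ t, i < M) :
    NP (insert M t) ↔ (NP t ∧ (M - 1) ∉ t) := by
  unfold NP
  constructor
  · intro h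
    refine ⟨fun i hi hc => h i (Finset.mem_insert_of_mem hi) (Finset.mem_insert_of_mem hc), ?_⟩
    intro hc
    have := h (M-1) (Finset.mem_insert_of_mem hc)
    have hMM : M - 1 + 1 = M := by omega
    rw [hMM] at this
    exact this (Finset.mem_insert_self M t)
  · rintro ⟨h1, h2⟩ i hi hc
    rcases Finset.mem_insert.mp hi with rfl | hi'
    · rcases Finset.mem_insert.mp hc with h' | h'
      · omega
      · exact absurd (ht _ h') (by omega)
    · rcases Finset.mem_insert.mp hc with h' | h'
      · have hiM : i = M - 1 := by omega
        exact h2 (hiM ▸ hi')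
      · exact h1 i hi' h'

/-- restrict the powerset domain when the condition enforces it -/
lemma sum_if_subset (A B : Finset ℕ) (hAB : A ⊆ B) (f : Finset ℕ → ℤ) :
    ∑ t ∈ B.powerset, (if NP t ∧ t ⊆ A then f t else 0)
      = ∑ t ∈ A.powerset, (if NP t then f t else 0) := by
  rw [← Finset.sum_subset (Finset.powerset_mono.mpr hAB)]
  · apply Finset.sum_congr rfl
    intro t ht
    have : t ⊆ A := Finset.mem_powerset.mp ht
    simp [this]
  · intro t ht hnt
    have : ¬ t ⊆ A := fun h => hnt (Finset.mem_powerset.mpr h)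
    simp [this]

lemma P_rec (m : ℕ) : P (m + 2) = P (m + 1) - P m := by
  classical
  rw [P, S, ← Finset.sum_filter_add_sum_filter_not ((range (m+2)).powerset) (fun s => m + 1 ∈ s)]
  have h1 : (range (m+2)).powerset.filter (fun s => ¬ m + 1 ∈ s) = (range (m+1)).powerset := by
    ext s
    simp only [mem_filter, mem_powerset]
    constructor
    · rintro ⟨h, hm⟩ i hi
      have := mem_range.mp (h hi)
      have hne : i ≠ m + 1 := fun hc => hm (hc ▸ hi)
      exact mem_range.mpr (by omega)
    · intro h
      refine ⟨fun i hi => mem_range.mpr (by have := mem_range.mp (h hi); omega),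
        fun hc => by have := mem_range.mp (h hc); omega⟩
  have h2 : ∑ s ∈ (range (m+2)).powerset.filter (fun s => m + 1 ∈ s),
      (if NP s then (-1 : ℤ) ^ s.card else 0) = - P m := by
    have step : ∑ s ∈ (range (m+2)).powerset.filter (fun s => m + 1 ∈ s),
        (if NP s then (-1 : ℤ) ^ s.card else 0)
        = ∑ t ∈ (range (m+1)).powerset,
          (if NP t ∧ t ⊆ range m then -(-1 : ℤ) ^ t.card else 0) := by
      refine Finset.sum_nbij' (fun s => s.erase (m+1)) (fun t => insert (m+1) t) ?_ ?_ ?_ ?_ ?_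
      · intro s hs
        simp only [mem_filter, mem_powerset] at hs
        rw [mem_powerset]
        intro i hi
        have := mem_range.mp (hs.1 (Finset.mem_of_mem_erase hi))
        have := Finset.ne_of_mem_erase hi
        exact mem_range.mpr (by omega)
      · intro t ht
        rw [mem_powerset] at ht
        simp only [mem_filter, mem_powerset]
        refine ⟨?_, Finset.mem_insert_self _ _⟩
        intro i hi
        rcases Finset.mem_insert.mp hi with rfl | hi'
        · exact mem_range.mpr (by omega)
        · exact mem_range.mpr (by have := mem_range.mp (ht hi'); omega)
      · intro s hs
        simp only [mem_filter] at hs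
        exact Finset.insert_erase hs.2
      · intro t ht
        rw [mem_powerset] at ht
        apply Finset.erase_insert
        intro hc
        exact absurd (mem_range.mp (ht hc)) (by omega)
      · intro s hs
        simp only [mem_filter, mem_powerset] at hs
        obtain ⟨hsub, hmem⟩ := hs
        set t := s.erase (m+1) with htdef
        have hts : s = insert (m+1) t := (Finset.insert_erase hmem).symm
        have htlt : ∀ i ∈ t, i < m + 1 := by
          intro i hi
          have := mem_range.mp (hsub (Finset.mem_of_mem_erase hi))
          have := Finset.ne_of_mem_erase hi
          omega
        have hNP : NP s ↔ (NP t ∧ m ∉ t) := by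
          rw [hts, NP_insert (by omega) htlt]
          simp
        have hsubiff : (t ⊆ range m) ↔ (m ∉ t) := by
          constructor
          · intro h hc; exact absurd (mem_range.mp (h hc)) (by omega)
          · intro h i hi
            have := htlt i hi
            have : i ≠ m := fun hc => h (hc ▸ hi)
            exact mem_range.mpr (by omega)
        have hcard : s.card = t.card + 1 := by
          rw [hts, Finset.card_insert_of_notMem]
          intro hc
          exact absurd (htlt _ hc) (by omega)
        by_cases hnp : NP s
        · have := hNP.mp hnp
          rw [if_pos hnp, if_pos ⟨this.1, hsubiff.mpr this.2⟩, hcard]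
          ring
        · rw [if_neg hnp, if_neg]
          intro hc
          exact hnp (hNP.mpr ⟨hc.1, hsubiff.mp hc.2⟩)
    rw [step, sum_if_subset (range m) (range (m+1)) (by intro i h; exact mem_range.mpr (by have := mem_range.mp h; omega)) (fun t => -(-1:ℤ)^t.card)]
    rw [P, S, ← Finset.sum_neg_distrib]
    apply Finset.sum_congr rfl
    intro t _
    split <;> simp
  rw [h1, h2]
  unfold P S
  ring

lemma S_shift (k : ℕ) : S (Ico 1 (k+1)) = P k := by
  classical
  rw [S, P, S]
  refine Finset.sum_nbij' (fun s => s.image (· - 1)) (fun t => t.image (· + 1)) ?_ ?_ ?_ ?_ ?_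
  · intro s hs
    rw [mem_powerset] at hs ⊢
    intro i hi
    obtain ⟨j, hj, rfl⟩ := Finset.mem_image.mp hi
    have := Finset.mem_Ico.mp (hs hj)
    exact mem_range.mpr (by omega)
  · intro t ht
    rw [mem_powerset] at ht ⊢
    intro i hi
    obtain ⟨j, hj, rfl⟩ := Finset.mem_image.mp hi
    have := mem_range.mp (ht hj)
    exact Finset.mem_Ico.mpr (by omega)
  · intro s hs
    rw [mem_powerset] at hs
    ext a
    simp only [Finset.mem_image]
    constructor
    · rintro ⟨b, ⟨c, hc, rfl⟩, rfl⟩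
      have := Finset.mem_Ico.mp (hs hc)
      have : c - 1 + 1 = c := by omega
      rwa [this]
    · intro ha
      have := Finset.mem_Ico.mp (hs ha)
      exact ⟨a - 1, ⟨a, ha, rfl⟩, by omega⟩
  · intro t ht
    rw [mem_powerset] at ht
    ext a
    simp only [Finset.mem_image]
    constructor
    · rintro ⟨b, ⟨c, hc, rfl⟩, rfl⟩
      simpa using hc
    · intro ha
      exact ⟨a + 1, ⟨a, ha, rfl⟩, by omega⟩
  · intro s hs
    rw [mem_powerset] at hs
    have hpos : ∀ i ∈ s, 1 ≤ i := fun i hi => (Finset.mem_Ico.mp (hs hi)).1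
    have hinj : Set.InjOn (· - 1) s := by
      intro a ha b hb hab
      have := hpos a ha; have := hpos b hb
      simp only at hab
      omega
    have hcard : (s.image (· - 1)).card = s.card := Finset.card_image_of_injOn hinj
    have hNP : NP s ↔ NP (s.image (· - 1)) := by
      constructor
      · intro h i hi hc
        obtain ⟨a, ha, rfl⟩ := Finset.mem_image.mp hi
        obtain ⟨b, hb, hb'⟩ := Finset.mem_image.mp hc
        have := hpos a ha; have := hpos b hb
        have : b = a + 1 := by omega
        exact h a ha (this ▸ hb)
      · intro h i hi hc
        have h1 : i - 1 ∈ s.image (· - 1) := Finset.mem_image_of_mem _ hi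
        have h2 : i ∈ s.image (· - 1) := by
          refine Finset.mem_image.mpr ⟨i + 1, hc, by omega⟩
        have := hpos i hi
        have : i - 1 + 1 = i := by omega
        exact h (i - 1) h1 (this ▸ h2)
    rw [hcard]
    by_cases h : NP s
    · rw [if_pos h, if_pos (hNP.mp h)]
    · rw [if_neg h, if_neg (fun hc => h (hNP.mpr hc))]

lemma P_per6 (k : ℕ) : P (k + 6) = P k := by
  have r0 := P_rec k
  have r1 := P_rec (k+1)
  have r2 := P_rec (k+2)
  have r3 := P_rec (k+3)
  have r4 := P_rec (k+4)
  have e1 : k + 1 + 2 = k + 3 := by ring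
  have e2 : k + 2 + 2 = k + 4 := by ring
  have e3 : k + 3 + 2 = k + 5 := by ring
  have e4 : k + 4 + 2 = k + 6 := by ring
  rw [e1] at r1; rw [e2] at r2; rw [e3] at r3; rw [e4] at r4
  linarith

lemma P_mod (q r : ℕ) : P (6 * q + r) = P r := by
  induction q with
  | zero => simp
  | succ q ih =>
    have : 6 * (q + 1) + r = (6 * q + r) + 6 := by ring
    rw [this, P_per6, ih]

lemma P_two : P 2 = -1 := by have := P_rec 0; rw [P_zero, P_one] at this; linarith
lemma P_three : P 3 = -1 := by have := P_rec 1; rw [P_one, P_two] at this; linarith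
lemma P_four : P 4 = 0 := by have := P_rec 2; rw [P_two, P_three] at this; linarith
lemma P_five : P 5 = 1 := by have := P_rec 3; rw [P_three, P_four] at this; linarith

noncomputable def CS (m : ℕ) : ℤ :=
  ∑ s ∈ (range m).powerset, if (NP s ∧ ¬(0 ∈ s ∧ m - 1 ∈ s)) then (-1 : ℤ) ^ s.card else 0

lemma CS_eq (k : ℕ) : CS (k + 3) = P (k + 2) - P k := by
  classical
  rw [CS, ← Finset.sum_filter_add_sum_filter_not ((range (k+3)).powerset) (fun s => k + 2 ∈ s)]
  have h1 : (range (k+3)).powerset.filter (fun s => ¬ k + 2 ∈ s) = (range (k+2)).powerset := by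
    ext s
    simp only [mem_filter, mem_powerset]
    constructor
    · rintro ⟨h, hm⟩ i hi
      have := mem_range.mp (h hi)
      have hne : i ≠ k + 2 := fun hc => hm (hc ▸ hi)
      exact mem_range.mpr (by omega)
    · intro h
      refine ⟨fun i hi => mem_range.mpr (by have := mem_range.mp (h hi); omega),
        fun hc => by have := mem_range.mp (h hc); omega⟩
  have hA : ∑ s ∈ (range (k+2)).powerset,
      (if (NP s ∧ ¬(0 ∈ s ∧ k + 3 - 1 ∈ s)) then (-1 : ℤ) ^ s.card else 0) = P (k + 2) := by
    rw [P, S]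
    apply Finset.sum_congr rfl
    intro s hs
    rw [mem_powerset] at hs
    have hk2 : k + 3 - 1 ∉ s := by
      intro hc
      have := mem_range.mp (hs hc)
      omega
    by_cases h : NP s
    · rw [if_pos ⟨h, fun hc => hk2 hc.2⟩, if_pos h]
    · rw [if_neg (fun hc => h hc.1), if_neg h]
  have h2 : ∑ s ∈ (range (k+3)).powerset.filter (fun s => k + 2 ∈ s),
      (if (NP s ∧ ¬(0 ∈ s ∧ k + 3 - 1 ∈ s)) then (-1 : ℤ) ^ s.card else 0) = - P k := by
    have step : ∑ s ∈ (range (k+3)).powerset.filter (fun s => k + 2 ∈ s),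
        (if (NP s ∧ ¬(0 ∈ s ∧ k + 3 - 1 ∈ s)) then (-1 : ℤ) ^ s.card else 0)
        = ∑ t ∈ (range (k+2)).powerset,
          (if NP t ∧ t ⊆ Ico 1 (k+1) then -(-1 : ℤ) ^ t.card else 0) := by
      refine Finset.sum_nbij' (fun s => s.erase (k+2)) (fun t => insert (k+2) t) ?_ ?_ ?_ ?_ ?_
      · intro s hs
        simp only [mem_filter, mem_powerset] at hs
        rw [mem_powerset]
        intro i hi
        have := mem_range.mp (hs.1 (Finset.mem_of_mem_erase hi))
        have := Finset.ne_of_mem_erase hi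
        exact mem_range.mpr (by omega)
      · intro t ht
        rw [mem_powerset] at ht
        simp only [mem_filter, mem_powerset]
        refine ⟨?_, Finset.mem_insert_self _ _⟩
        intro i hi
        rcases Finset.mem_insert.mp hi with rfl | hi'
        · exact mem_range.mpr (by omega)
        · exact mem_range.mpr (by have := mem_range.mp (ht hi'); omega)
      · intro s hs
        simp only [mem_filter] at hs
        exact Finset.insert_erase hs.2
      · intro t ht
        rw [mem_powerset] at ht
        apply Finset.erase_insert
        intro hc
        exact absurd (mem_range.mp (ht hc)) (by omega)
      · intro s hs
        simp only [mem_filter, mem_powerset] at hs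
        obtain ⟨hsub, hmem⟩ := hs
        set t := s.erase (k+2) with htdef
        have hts : s = insert (k+2) t := (Finset.insert_erase hmem).symm
        have htlt : ∀ i ∈ t, i < k + 2 := by
          intro i hi
          have := mem_range.mp (hsub (Finset.mem_of_mem_erase hi))
          have := Finset.ne_of_mem_erase hi
          omega
        have hNP : NP s ↔ (NP t ∧ k + 1 ∉ t) := by
          rw [hts, NP_insert (by omega) htlt]
          simp
        have h0 : (0 ∈ s) ↔ (0 ∈ t) := by
          rw [hts, Finset.mem_insert]
          simp only [show (0:ℕ) ≠ k + 2 by omega, false_or]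
        have hm1 : k + 3 - 1 ∈ s := by
          have : k + 3 - 1 = k + 2 := by omega
          rw [this, hts]; exact Finset.mem_insert_self _ _
        have hsubiff : (t ⊆ Ico 1 (k+1)) ↔ (0 ∉ t ∧ k + 1 ∉ t) := by
          constructor
          · intro h
            constructor
            · intro hc; have := Finset.mem_Ico.mp (h hc); omega
            · intro hc; have := Finset.mem_Ico.mp (h hc); omega
          · rintro ⟨hz, hk⟩ i hi
            have := htlt i hi
            have hi0 : i ≠ 0 := fun hc => hz (hc ▸ hi)
            have hik : i ≠ k + 1 := fun hc => hk (hc ▸ hi)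
            exact Finset.mem_Ico.mpr (by omega)
        have hcard : s.card = t.card + 1 := by
          rw [hts, Finset.card_insert_of_notMem]
          intro hc
          exact absurd (htlt _ hc) (by omega)
        by_cases hcond : NP s ∧ ¬(0 ∈ s ∧ k + 3 - 1 ∈ s)
        · obtain ⟨hnp, hw⟩ := hcond
          have h0t : 0 ∉ t := fun hc => hw ⟨h0.mpr hc, hm1⟩
          obtain ⟨hnpt, hk1⟩ := hNP.mp hnp
          rw [if_pos ⟨hnp, hw⟩, if_pos ⟨hnpt, hsubiff.mpr ⟨h0t, hk1⟩⟩, hcard]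
          ring
        · rw [if_neg hcond, if_neg]
          rintro ⟨hnpt, hsub'⟩
          obtain ⟨h0t, hk1⟩ := hsubiff.mp hsub'
          exact hcond ⟨hNP.mpr ⟨hnpt, hk1⟩, fun hc => h0t (h0.mp hc.1)⟩
    rw [step, sum_if_subset (Ico 1 (k+1)) (range (k+2))
      (by intro i h; have := Finset.mem_Ico.mp h; exact mem_range.mpr (by omega))
      (fun t => -(-1:ℤ)^t.card)]
    have : ∑ t ∈ (Ico 1 (k+1)).powerset, (if NP t then -(-1:ℤ)^t.card else 0)
        = - S (Ico 1 (k+1)) := by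
      rw [S, ← Finset.sum_neg_distrib]
      apply Finset.sum_congr rfl
      intro t _
      split <;> simp
    rw [this, S_shift]
  rw [h1, h2, hA]
  ring



lemma indep_iff {m : ℕ} (hm : 3 ≤ m) (s : Finset (Fin m)) :
    (SimpleGraph.cycleGraph m).IsIndep s ↔
      (NP (s.image Fin.val) ∧ ¬(0 ∈ s.image Fin.val ∧ m - 1 ∈ s.image Fin.val)) := by
  constructor
  · intro h
    constructor
    · intro i hi hc
      obtain ⟨u, hu, hu'⟩ := Finset.mem_image.mp hi
      obtain ⟨v, hv, hv'⟩ := Finset.mem_image.mp hc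
      exact h u hu v hv ((cycle_adj_iff hm u v).mpr (Or.inl (by omega)))
    · rintro ⟨h0, h1⟩
      obtain ⟨u, hu, hu'⟩ := Finset.mem_image.mp h0
      obtain ⟨v, hv, hv'⟩ := Finset.mem_image.mp h1
      exact h u hu v hv ((cycle_adj_iff hm u v).mpr (Or.inr (Or.inr (Or.inl ⟨hu', hv'⟩))))
  · rintro ⟨hNP, hw⟩ u hu v hv hadj
    rcases (cycle_adj_iff hm u v).mp hadj with h | h | h | h
    · exact hNP u.val (Finset.mem_image_of_mem _ hu)
        (by rw [h]; exact Finset.mem_image_of_mem _ hv)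
    · exact hNP v.val (Finset.mem_image_of_mem _ hv)
        (by rw [h]; exact Finset.mem_image_of_mem _ hu)
    · exact hw ⟨by rw [← h.1]; exact Finset.mem_image_of_mem _ hu,
        by rw [← h.2]; exact Finset.mem_image_of_mem _ hv⟩
    · exact hw ⟨by rw [← h.1]; exact Finset.mem_image_of_mem _ hv,
        by rw [← h.2]; exact Finset.mem_image_of_mem _ hu⟩

lemma main_sum {m : ℕ} (hm : 3 ≤ m) :
    ∑ s ∈ Finset.univ.filter (SimpleGraph.cycleGraph m).IsIndep, (-1 : ℤ) ^ s.card = CS m := by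
  classical
  rw [Finset.sum_filter, CS]
  refine Finset.sum_nbij' (fun s => s.image Fin.val)
      (fun t => Finset.univ.filter (fun v : Fin m => v.val ∈ t)) ?_ ?_ ?_ ?_ ?_
  · intro s _
    rw [mem_powerset]
    intro i hi
    obtain ⟨u, _, rfl⟩ := Finset.mem_image.mp hi
    exact mem_range.mpr u.isLt
  · intro t _
    exact Finset.mem_univ _
  · intro s _
    ext v
    simp only [Finset.mem_filter, Finset.mem_univ, true_and, Finset.mem_image]
    constructor
    · rintro ⟨u, hu, hu'⟩
      rwa [← Fin.val_injective hu']
    · intro hv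
      exact ⟨v, hv, rfl⟩
  · intro t ht
    rw [mem_powerset] at ht
    ext a
    simp only [Finset.mem_image, Finset.mem_filter, Finset.mem_univ, true_and]
    constructor
    · rintro ⟨u, hu, rfl⟩
      exact hu
    · intro ha
      exact ⟨⟨a, mem_range.mp (ht ha)⟩, ha, rfl⟩
  · intro s _
    have hcard : (s.image Fin.val).card = s.card :=
      Finset.card_image_of_injective _ Fin.val_injective
    rw [hcard]
    by_cases h : (SimpleGraph.cycleGraph m).IsIndep s
    · rw [if_pos h, if_pos ((indep_iff hm s).mp h)]
    · rw [if_neg h, if_neg (fun hc => h ((indep_iff hm s).mpr hc))]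

lemma abs_CS (n : ℕ) (hn : 1 ≤ n) : (CS (3 * n)).natAbs = 2 := by
  obtain ⟨j, hj⟩ : ∃ j, n = j + 1 := ⟨n - 1, by omega⟩
  subst hj
  have h3 : 3 * (j + 1) = 3 * j + 3 := by ring
  rw [h3, CS_eq]
  rcases Nat.even_or_odd j with ⟨b, hb⟩ | ⟨b, hb⟩
  · subst hb
    have e1 : 3 * (b + b) + 2 = 6 * b + 2 := by ring
    have e2 : 3 * (b + b) = 6 * b + 0 := by ring
    rw [e1, e2, P_mod, P_mod, P_two, P_zero]
    rfl
  · subst hb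
    have e1 : 3 * (2 * b + 1) + 2 = 6 * b + 5 := by ring
    have e2 : 3 * (2 * b + 1) = 6 * b + 3 := by ring
    rw [e1, e2, P_mod, P_mod, P_five, P_three]
    rfl

/-- For the cycle `C_{3n}` (`n ≥ 1`): `|χ̃(Ind(C_{3n}))| = 2` (computed as the absolute
value of the alternating sum over independent sets) and the decycling number is `1`,
so the bound `|χ̃| ≤ 2^{φ}` is tight. -/
theorem cycle_three_n_tight (n : ℕ) (hn : 1 ≤ n) :
    (∑ s ∈ Finset.univ.filter (SimpleGraph.cycleGraph (3 * n)).IsIndep,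
        (-1 : ℤ) ^ s.card).natAbs = 2
    ∧ sInf {k : ℕ | ∃ D : Finset (Fin (3 * n)), D.card = k ∧
        ((SimpleGraph.cycleGraph (3 * n)).induce ((↑D : Set (Fin (3 * n)))ᶜ)).IsAcyclic}
      = 1 := by
  have hm : 3 ≤ 3 * n := by omega
  constructor
  · rw [main_sum hm]
    exact abs_CS n hn
  · have h1 : 1 ∈ {k : ℕ | ∃ D : Finset (Fin (3 * n)), D.card = k ∧
        ((SimpleGraph.cycleGraph (3 * n)).induce ((↑D : Set (Fin (3 * n)))ᶜ)).IsAcyclic} :=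
      ⟨{⟨0, by omega⟩}, Finset.card_singleton _, induced_acyclic hm _ rfl⟩
    have h0 : 0 ∉ {k : ℕ | ∃ D : Finset (Fin (3 * n)), D.card = k ∧
        ((SimpleGraph.cycleGraph (3 * n)).induce ((↑D : Set (Fin (3 * n)))ᶜ)).IsAcyclic} := by
      rintro ⟨D, hD, hac⟩
      rw [Finset.card_eq_zero] at hD
      subst hD
      have hset : ((↑(∅ : Finset (Fin (3 * n))) : Set (Fin (3 * n))))ᶜ = Set.univ := by
        simp
      rw [hset] at hac
      exact cycle_not_acyclic hm
        (isAcyclic_of_iso (SimpleGraph.induceUnivIso _).symm hac)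
    apply le_antisymm
    · exact Nat.sInf_le h1
    · have hne : sInf {k : ℕ | ∃ D : Finset (Fin (3 * n)), D.card = k ∧
          ((SimpleGraph.cycleGraph (3 * n)).induce ((↑D : Set (Fin (3 * n)))ᶜ)).IsAcyclic} ≠ 0 := by
        intro hc
        rcases Nat.sInf_eq_zero.mp hc with h | h
        · exact h0 h
        · rw [h] at h1
          exact absurd h1 (Set.notMem_empty 1)
      omega
end

section
/- Let G be a graph and R ⊆ V(G) a set of vertices such that every two distinct vertices of R are at distance at least 3 in G, and every independent set of G \ R has size at most |R|. Then for every independent set σ of G \ R with ∪_{v∈σ} N(v) ⊇ R, σ has exactly |R| elements and each vertex of R has exactly one neighbor in σ. -/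
open Finset

attribute [local instance] Classical.propDecidable

/-- (Core of the generalized 3-rule.)  Suppose every two distinct vertices of `R` are at
distance at least `3` in `G` (non-adjacent and with no common neighbor), and every
independent set of `G \ R` has at most `|R|` elements.  Then every independent set `σ`
of `G \ R` whose neighborhoods cover `R` has exactly `|R|` elements, and every vertex of
`R` has exactly one neighbor in `σ`. -/
theorem generalized_three_rule_core {V : Type*} [Fintype V] (G : SimpleGraph V)
    (R : Finset V)
    (hdist : ∀ u ∈ R, ∀ w ∈ R, u ≠ w →
      ¬ G.Adj u w ∧ ∀ x : V, ¬(G.Adj u x ∧ G.Adj w x))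
    (hmax : ∀ σ : Finset V, (∀ x ∈ σ, x ∉ R) → G.IsIndep σ → σ.card ≤ R.card) :
    ∀ σ : Finset V, (∀ x ∈ σ, x ∉ R) → G.IsIndep σ →
      (∀ w ∈ R, ∃ v ∈ σ, G.Adj v w) →
      σ.card = R.card ∧ ∀ w ∈ R, ∃! v : V, v ∈ σ ∧ G.Adj v w := by
  intro σ hσR hind hcov
  classical
  set g : V → V := fun w => if h : ∃ v ∈ σ, G.Adj v w then h.choose else w with hgdef
  have hgmem : ∀ w ∈ R, g w ∈ σ := by
    intro w hw
    have h := hcov w hw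
    simp only [hgdef, dif_pos h]
    exact h.choose_spec.1
  have hgadj : ∀ w ∈ R, G.Adj (g w) w := by
    intro w hw
    have h := hcov w hw
    simp only [hgdef, dif_pos h]
    exact h.choose_spec.2
  have hinj : Set.InjOn g R := by
    intro w1 h1 w2 h2 heq
    by_contra hne
    exact (hdist w1 h1 w2 h2 hne).2 (g w1)
      ⟨(hgadj w1 h1).symm, heq ▸ (hgadj w2 h2).symm⟩
  have hle : R.card ≤ σ.card := Finset.card_le_card_of_injOn g hgmem hinj
  have hcard : σ.card = R.card := le_antisymm (hmax σ hσR hind) hle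
  refine ⟨hcard, fun w hw => ?_⟩
  have hsurj : ∀ v ∈ σ, ∃ w ∈ R, g w = v := by
    intro v hv
    obtain ⟨w', hw', heq⟩ := Finset.surj_on_of_inj_on_of_card_le (fun w _ => g w)
      hgmem (fun a b ha hb h => hinj ha hb h) hcard.le v hv
    exact ⟨w', hw', heq.symm⟩
  have key : ∀ v ∈ σ, G.Adj v w → v = g w := by
    intro v hv hadj
    obtain ⟨w', hw', hgw'⟩ := hsurj v hv
    have hadj' : G.Adj v w' := hgw' ▸ hgadj w' hw'
    by_cases hne : w' = w
    · exact (hne ▸ hgw').symm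
    · exact absurd ⟨hadj'.symm, hadj.symm⟩ ((hdist w' hw' w hw hne).2 v)
  exact ⟨g w, ⟨hgmem w hw, hgadj w hw⟩, fun v ⟨hv, hadj⟩ => key v hv hadj⟩
end

section
/- Let G be a graph and R ⊆ V(G) such that all pairs of distinct vertices in R are at distance at least 3, and no independent set of G \ R has more than |R| elements. Then the reduced homology of Ind(G) over Q is concentrated in dimension |R| − 1, and its rank K equals the number of independent sets σ of G \ R of size |R| with R ⊆ ∪_{v ∈ σ} N(v). -/
open Finset

attribute [local instance] Classical.propDecidable

variable {V : Type*} [Fintype V] [LinearOrder V]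

/-- The faces of the independence complex `Ind(G)` with exactly `k` vertices
(i.e. of dimension `k - 1`); for `k = 0` this is just the empty face. -/
def IndFace (G : SimpleGraph V) (k : ℕ) : Type _ :=
  {s : Finset V // G.IsIndep s ∧ s.card = k}

/-- The space of rational `k`-chains (spanned by faces with `k` vertices) of the
(augmented) simplicial chain complex of `Ind(G)`. -/
abbrev IndChains (G : SimpleGraph V) (k : ℕ) : Type _ := IndFace G k →₀ ℚ

/-- The boundary of a face with `k+1` vertices: the alternating sum of its codimension
one subfaces, with signs determined by the linear order on the vertices.  For `k = 0`
this is the augmentation map to the span of the empty face. -/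
noncomputable def indBoundaryOf (G : SimpleGraph V) (k : ℕ) (s : IndFace G (k + 1)) :
    IndChains G k :=
  ∑ x ∈ s.1.attach,
    ((-1 : ℚ) ^ (s.1.filter (fun y => y < x.1)).card) •
      Finsupp.single
        (⟨s.1.erase x.1,
          fun u hu v hv => s.2.1 u (Finset.mem_of_mem_erase hu) v (Finset.mem_of_mem_erase hv),
          by simp [Finset.card_erase_of_mem x.2, s.2.2]⟩ : IndFace G k) 1

/-- The simplicial boundary operator of the augmented chain complex of `Ind(G)`. -/
noncomputable def indBoundary (G : SimpleGraph V) (k : ℕ) :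
    IndChains G (k + 1) →ₗ[ℚ] IndChains G k :=
  Finsupp.lsum ℚ (fun s => LinearMap.toSpanSingleton ℚ _ (indBoundaryOf G k s))

/-- The dimension over `ℚ` of the reduced simplicial homology group
`H̃_i(Ind(G); ℚ)`: cycles in dimension `i` (faces with `i+1` vertices) modulo
boundaries from dimension `i+1`.  The augmented complex (with the empty face in
degree `-1`) yields reduced homology. -/
noncomputable def reducedHomologyRank (G : SimpleGraph V) (i : ℕ) : ℕ :=
  Module.finrank ℚ
    (LinearMap.ker (indBoundary G i) ⧸
      (LinearMap.range (indBoundary G (i + 1))).comap (LinearMap.ker (indBoundary G i)).subtype)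
set_option linter.unusedSectionVars false

namespace ThreeRule

noncomputable def sgn (s : Finset V) (x : V) : ℚ := (-1) ^ (s.filter (fun y => y < x)).card

noncomputable def Dchain (s : Finset V) : Finset V →₀ ℚ :=
  ∑ x ∈ s, sgn s x • Finsupp.single (s.erase x) (1:ℚ)

noncomputable def bigD : (Finset V →₀ ℚ) →ₗ[ℚ] (Finset V →₀ ℚ) :=
  Finsupp.lsum ℚ (fun s => LinearMap.toSpanSingleton ℚ _ (Dchain s))

lemma bigD_single (s : Finset V) (c : ℚ) : bigD (Finsupp.single s c) = c • Dchain s := by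
  simp [bigD, Finsupp.lsum_single, LinearMap.toSpanSingleton_apply]

lemma filter_lt_erase_card (s : Finset V) {x : V} (hx : x ∈ s) (z : V) :
    (s.filter (fun y => y < z)).card
      = ((s.erase x).filter (fun y => y < z)).card + (if x < z then 1 else 0) := by
  rw [Finset.filter_erase]
  by_cases h : x < z
  · have hxf : x ∈ s.filter (fun y => y < z) := Finset.mem_filter.mpr ⟨hx, h⟩
    have hpos : 0 < (s.filter (fun y => y < z)).card := Finset.card_pos.mpr ⟨x, hxf⟩
    rw [if_pos h, Finset.card_erase_of_mem hxf]
    omega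
  · have hxf : x ∉ s.filter (fun y => y < z) := fun hc => h (Finset.mem_filter.mp hc).2
    rw [if_neg h, Finset.erase_eq_of_notMem hxf, Nat.add_zero]

lemma filter_lt_insert_card (s : Finset V) {x : V} (hx : x ∉ s) (z : V) :
    ((insert x s).filter (fun y => y < z)).card
      = (s.filter (fun y => y < z)).card + (if x < z then 1 else 0) := by
  rw [Finset.filter_insert]
  by_cases h : x < z
  · have hxf : x ∉ s.filter (fun y => y < z) := fun hc => hx (Finset.mem_filter.mp hc).1
    rw [if_pos h, if_pos h, Finset.card_insert_of_notMem hxf]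
  · rw [if_neg h, if_neg h, Nat.add_zero]

lemma sgn_mul_self (s t : Finset V) (x y : V)
    (h : (s.filter (fun y' => y' < x)).card = (t.filter (fun y' => y' < y)).card) :
    sgn s x * sgn t y = 1 := by
  simp only [sgn, h, ← mul_pow]
  norm_num

lemma sum_erase_eq_sum_ite {β : Type*} [AddCommMonoid β] (s : Finset V) (x : V) (f : V → β) :
    ∑ y ∈ s.erase x, f y = ∑ y ∈ s, if y ≠ x then f y else 0 := by
  rw [← Finset.filter_ne' s x, Finset.sum_filter]

lemma bigD_Dchain (s : Finset V) : bigD (Dchain s) = 0 := by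
  have hexp : bigD (Dchain s) = ∑ x ∈ s, ∑ y ∈ s.erase x,
      (sgn s x * sgn (s.erase x) y) • Finsupp.single ((s.erase x).erase y) (1:ℚ) := by
    simp only [Dchain, map_sum, map_smul, bigD_single, Finset.smul_sum, smul_smul, one_mul]
  have hpair : ∑ p ∈ (s ×ˢ s).filter (fun p => p.2 ≠ p.1),
        (sgn s p.1 * sgn (s.erase p.1) p.2) • Finsupp.single ((s.erase p.1).erase p.2) (1:ℚ)
      = ∑ x ∈ s, ∑ y ∈ s.erase x,
        (sgn s x * sgn (s.erase x) y) • Finsupp.single ((s.erase x).erase y) (1:ℚ) := by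
    rw [Finset.sum_filter, Finset.sum_product]
    refine Finset.sum_congr rfl (fun x hx => ?_)
    rw [sum_erase_eq_sum_ite]
  rw [hexp, ← hpair]
  apply Finset.sum_involution (g := fun p _ => (p.2, p.1))
  · intro p hp
    obtain ⟨hmem, hne⟩ := Finset.mem_filter.mp hp
    obtain ⟨h1, h2⟩ := Finset.mem_product.mp hmem
    simp only
    have herase : (s.erase p.2).erase p.1 = (s.erase p.1).erase p.2 := Finset.erase_right_comm
    rw [herase, ← add_smul]
    convert zero_smul ℚ (Finsupp.single ((s.erase p.1).erase p.2) (1:ℚ))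
    have e1 : (s.filter (fun y => y < p.1)).card
        = ((s.erase p.2).filter (fun y => y < p.1)).card + (if p.2 < p.1 then 1 else 0) :=
      filter_lt_erase_card s h2 p.1
    have e2 : (s.filter (fun y => y < p.2)).card
        = ((s.erase p.1).filter (fun y => y < p.2)).card + (if p.1 < p.2 then 1 else 0) :=
      filter_lt_erase_card s h1 p.2
    simp only [sgn]
    rw [e1, e2]
    rcases lt_or_gt_of_ne (hne : p.2 ≠ p.1) with h | h
    · rw [if_pos h, if_neg (asymm h)]
      ring
    · rw [if_neg (asymm h), if_pos h]
      ring
  · intro p hp _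
    obtain ⟨hmem, hne⟩ := Finset.mem_filter.mp hp
    intro hc
    exact hne (congrArg Prod.fst hc)
  · intro p hp
    obtain ⟨hmem, hne⟩ := Finset.mem_filter.mp hp
    obtain ⟨h1, h2⟩ := Finset.mem_product.mp hmem
    exact Finset.mem_filter.mpr ⟨Finset.mem_product.mpr ⟨h2, h1⟩, Ne.symm hne⟩
  · intro p hp
    rfl

lemma bigD_bigD (z : Finset V →₀ ℚ) : bigD (bigD z) = 0 := by
  induction z using Finsupp.induction_linear with
  | zero => simp
  | add f g hf hg => simp [map_add, hf, hg]
  | single a b => rw [bigD_single, map_smul, bigD_Dchain, smul_zero]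

lemma Dchain_support {s μ : Finset V} (h : μ ∈ (Dchain s).support) :
    ∃ x ∈ s, μ = s.erase x := by
  classical
  obtain ⟨x, hx, hmem⟩ := Finset.mem_biUnion.mp (Finsupp.support_finset_sum h)
  refine ⟨x, hx, ?_⟩
  have h2 := Finsupp.support_single_subset (Finsupp.support_smul hmem)
  simpa using h2

lemma bigD_eq_sum (z : Finset V →₀ ℚ) : bigD z = ∑ t ∈ z.support, (z t) • Dchain t := by
  conv_lhs => rw [← Finsupp.sum_single z]
  rw [Finsupp.sum, map_sum]
  refine Finset.sum_congr rfl (fun t ht => ?_)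
  rw [bigD_single]

lemma bigD_support {z : Finset V →₀ ℚ} {μ : Finset V} (h : μ ∈ (bigD z).support) :
    ∃ t ∈ z.support, ∃ x ∈ t, μ = t.erase x := by
  classical
  rw [bigD_eq_sum] at h
  obtain ⟨t, ht, hmem⟩ := Finset.mem_biUnion.mp (Finsupp.support_finset_sum h)
  obtain ⟨x, hx, hμ⟩ := Dchain_support (Finsupp.support_smul hmem)
  exact ⟨t, ht, x, hx, hμ⟩

section Graph

variable (G : SimpleGraph V) (R : Finset V)

noncomputable def UND (s : Finset V) : Finset V := R.filter (fun r => ¬ ∃ v ∈ s, G.Adj v r)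

lemma mem_UND {s : Finset V} {r : V} :
    r ∈ UND G R s ↔ r ∈ R ∧ ¬ ∃ v ∈ s, G.Adj v r := Finset.mem_filter

lemma UND_mono {s t : Finset V} (h : t ⊆ s) : UND G R s ⊆ UND G R t := by
  intro r hr
  rw [mem_UND] at hr ⊢
  exact ⟨hr.1, fun ⟨v, hv, hadj⟩ => hr.2 ⟨v, h hv, hadj⟩⟩

lemma indep_mono {s t : Finset V} (h : t ⊆ s) (hs : G.IsIndep s) : G.IsIndep t :=
  fun u hu v hv => hs u (h hu) v (h hv)

lemma indep_insert {s : Finset V} {r : V} (hs : G.IsIndep s) (h : ¬ ∃ v ∈ s, G.Adj v r) :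
    G.IsIndep (insert r s) := by
  intro u hu v hv
  rcases Finset.mem_insert.mp hu with hu' | hu' <;> rcases Finset.mem_insert.mp hv with hv' | hv'
  · subst hu'; subst hv'; exact G.irrefl
  · subst hu'; exact fun hadj => h ⟨v, hv', hadj.symm⟩
  · subst hv'; exact fun hadj => h ⟨u, hu', hadj⟩
  · exact hs u hu' v hv'

noncomputable def Hchain (s : Finset V) : Finset V →₀ ℚ :=
  if h : (UND G R s).Nonempty then
    (if G.IsIndep s ∧ (UND G R s).min' h ∉ s then
      sgn s ((UND G R s).min' h) • Finsupp.single (insert ((UND G R s).min' h) s) (1:ℚ)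
    else 0)
  else 0

noncomputable def bigH : (Finset V →₀ ℚ) →ₗ[ℚ] (Finset V →₀ ℚ) :=
  Finsupp.lsum ℚ (fun s => LinearMap.toSpanSingleton ℚ _ (Hchain G R s))

lemma bigH_single (s : Finset V) (c : ℚ) :
    bigH G R (Finsupp.single s c) = c • Hchain G R s := by
  simp [bigH, Finsupp.lsum_single, LinearMap.toSpanSingleton_apply]

lemma Hchain_support {s μ : Finset V} (h : μ ∈ (Hchain G R s).support) :
    G.IsIndep μ ∧ μ.card = s.card + 1 ∧ (UND G R μ).Nonempty := by
  rw [Hchain] at h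
  split at h
  case isFalse => simp at h
  case isTrue hne =>
    split at h
    case isFalse => simp at h
    case isTrue hgate =>
      set r := (UND G R s).min' hne with hrdef
      have hμeq : μ = insert r s := by
        have := Finsupp.support_single_subset (Finsupp.support_smul h)
        simpa using this
      have hrmem : r ∈ UND G R s := Finset.min'_mem _ hne
      have hrund : ¬ ∃ v ∈ s, G.Adj v r := (mem_UND G R).mp hrmem |>.2
      have hindep : G.IsIndep μ := hμeq ▸ indep_insert G hgate.1 hrund
      have hrin : r ∈ UND G R μ := by
        rw [mem_UND]
        refine ⟨((mem_UND G R).mp hrmem).1, ?_⟩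
        rintro ⟨v, hv, hadj⟩
        rw [hμeq] at hv
        rcases Finset.mem_insert.mp hv with hv' | hv'
        · exact G.irrefl (hv' ▸ hadj)
        · exact hrund ⟨v, hv', hadj⟩
      exact ⟨hindep, by rw [hμeq, Finset.card_insert_of_notMem hgate.2], ⟨r, hrin⟩⟩

lemma key (hnadj : ∀ u ∈ R, ∀ w ∈ R, u ≠ w → ¬ G.Adj u w)
    (σ : Finset V) (hi : G.IsIndep σ) (hnd : (UND G R σ).Nonempty) :
    ∀ μ ∈ (bigD (Hchain G R σ) + bigH G R (Dchain σ) - Finsupp.single σ (1:ℚ)).support,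
      G.IsIndep μ ∧ μ.card = σ.card ∧
        ∃ h' : (UND G R μ).Nonempty, (UND G R μ).min' h' < (UND G R σ).min' hnd := by
  set r := (UND G R σ).min' hnd with hrdef
  have hrmem : r ∈ UND G R σ := Finset.min'_mem _ hnd
  have hrR : r ∈ R := ((mem_UND G R).mp hrmem).1
  have hrund : ¬ ∃ v ∈ σ, G.Adj v r := ((mem_UND G R).mp hrmem).2
  -- the goal predicate
  set P : Finset V → Prop := fun μ => G.IsIndep μ ∧ μ.card = σ.card ∧
      ∃ h' : (UND G R μ).Nonempty, (UND G R μ).min' h' < r with hPdef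
  have hgood : ∀ (μ : Finset V) (r'' : V), G.IsIndep μ → μ.card = σ.card →
      r'' ∈ UND G R μ → r'' < r → P μ := by
    intro μ r'' h1 h2 h3 h4
    exact ⟨h1, h2, ⟨r'', h3⟩, lt_of_le_of_lt (Finset.min'_le _ r'' h3) h4⟩
  -- expansion of bigH (Dchain σ)
  have hHD : bigH G R (Dchain σ) = ∑ x ∈ σ, (sgn σ x) • Hchain G R (σ.erase x) := by
    simp only [Dchain, map_sum, map_smul, bigH_single, one_smul, smul_smul, mul_one]
  by_cases hrin : r ∈ σ
  · -- case r ∈ σ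
    have hH0 : Hchain G R σ = 0 := by
      rw [Hchain, dif_pos hnd, if_neg]
      rw [← hrdef]
      exact fun hc => hc.2 hrin
    -- the head term
    have hUNDsub : UND G R σ ⊆ UND G R (σ.erase r) := UND_mono G R (Finset.erase_subset r σ)
    have hne' : (UND G R (σ.erase r)).Nonempty := ⟨r, hUNDsub hrmem⟩
    have hUNDeq : UND G R (σ.erase r) = UND G R σ := by
      apply Finset.Subset.antisymm _ hUNDsub
      intro r' hr'
      rw [mem_UND] at hr' ⊢
      refine ⟨hr'.1, ?_⟩
      rintro ⟨v, hv, hadj⟩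
      by_cases hvr : v = r
      · subst hvr
        by_cases hr'r : r' = r
        · exact G.irrefl (hr'r ▸ hadj)
        · exact hnadj r hrR r' hr'.1 (Ne.symm hr'r) hadj
      · exact hr'.2 ⟨v, Finset.mem_erase.mpr ⟨hvr, hv⟩, hadj⟩
    have hmin' : (UND G R (σ.erase r)).min' hne' = r := by
      apply le_antisymm
      · exact Finset.min'_le _ r (hUNDsub hrmem)
      · apply Finset.le_min'
        intro y hy
        exact Finset.min'_le _ y (hUNDeq ▸ hy)
    have hhead : sgn σ r • Hchain G R (σ.erase r) = Finsupp.single σ (1:ℚ) := by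
      rw [Hchain, dif_pos hne', if_pos ⟨indep_mono G (Finset.erase_subset r σ) hi,
          by rw [hmin']; exact Finset.notMem_erase r σ⟩]
      rw [hmin', Finset.insert_erase hrin, smul_smul,
        sgn_mul_self σ (σ.erase r) r r (filter_lt_erase_card σ hrin r |>.trans (by
          rw [if_neg (lt_irrefl r), Nat.add_zero])), one_smul]
    have hexpr : bigD (Hchain G R σ) + bigH G R (Dchain σ) - Finsupp.single σ (1:ℚ)
        = ∑ x ∈ σ.erase r, sgn σ x • Hchain G R (σ.erase x) := by
      rw [hH0, map_zero, zero_add, hHD, ← Finset.add_sum_erase σ _ hrin, hhead,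
        add_sub_cancel_left]
    intro μ hμ
    rw [hexpr] at hμ
    obtain ⟨x, hx, hmem⟩ := Finset.mem_biUnion.mp (Finsupp.support_finset_sum hμ)
    have hxσ : x ∈ σ := Finset.mem_of_mem_erase hx
    have hxr : x ≠ r := (Finset.mem_erase.mp hx).1
    have hmem' := Finsupp.support_smul hmem
    -- analyze Hchain (σ.erase x)
    have hsub : UND G R σ ⊆ UND G R (σ.erase x) := UND_mono G R (Finset.erase_subset x σ)
    have hneτ : (UND G R (σ.erase x)).Nonempty := ⟨r, hsub hrmem⟩
    rw [Hchain, dif_pos hneτ] at hmem'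
    set r' := (UND G R (σ.erase x)).min' hneτ with hr'def
    split at hmem'
    rotate_left
    · simp at hmem'
    rename_i hgate
    have hμeq : μ = insert r' (σ.erase x) := by
      have := Finsupp.support_single_subset (Finsupp.support_smul hmem')
      simpa using this
    have hr'mem : r' ∈ UND G R (σ.erase x) := Finset.min'_mem _ hneτ
    have hr'und : ¬ ∃ v ∈ σ.erase x, G.Adj v r' := ((mem_UND G R).mp hr'mem).2
    have hr'le : r' ≤ r := Finset.min'_le _ r (hsub hrmem)
    have hr'ne : r' ≠ r := by
      intro hc
      apply hgate.2
      rw [hc]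
      exact Finset.mem_erase.mpr ⟨Ne.symm hxr, hrin⟩
    have hr'R : r' ∈ R := ((mem_UND G R).mp hr'mem).1
    have hr'inUND : r' ∈ UND G R μ := by
      rw [mem_UND]
      refine ⟨hr'R, ?_⟩
      rintro ⟨v, hv, hadj⟩
      rw [hμeq] at hv
      rcases Finset.mem_insert.mp hv with hv' | hv'
      · exact G.irrefl (hv' ▸ hadj)
      · exact hr'und ⟨v, hv', hadj⟩
    have hcard : μ.card = σ.card := by
      rw [hμeq, Finset.card_insert_of_notMem hgate.2, Finset.card_erase_of_mem hxσ]
      have : 0 < σ.card := Finset.card_pos.mpr ⟨x, hxσ⟩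
      omega
    exact hgood μ r' (hμeq ▸ indep_insert G (indep_mono G (Finset.erase_subset x σ) hi) hr'und)
      hcard hr'inUND (lt_of_le_of_ne hr'le hr'ne)
  · -- case r ∉ σ
    have hHσ : Hchain G R σ = sgn σ r • Finsupp.single (insert r σ) (1:ℚ) := by
      rw [Hchain, dif_pos hnd, ← hrdef, if_pos ⟨hi, hrin⟩]
    have hcard_eq : (σ.filter (fun y => y < r)).card
        = ((insert r σ).filter (fun y => y < r)).card := by
      rw [filter_lt_insert_card σ hrin r, if_neg (lt_irrefl r), Nat.add_zero]
    have hDH : bigD (Hchain G R σ) = Finsupp.single σ (1:ℚ)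
        + ∑ x ∈ σ, (sgn σ r * sgn (insert r σ) x) • Finsupp.single ((insert r σ).erase x) (1:ℚ) := by
      rw [hHσ, map_smul, bigD_single, one_smul, Dchain, Finset.sum_insert hrin, smul_add,
        Finset.smul_sum]
      congr 1
      · rw [Finset.erase_insert hrin, smul_smul, sgn_mul_self σ (insert r σ) r r hcard_eq,
          one_smul]
      · exact Finset.sum_congr rfl fun x hx => by rw [smul_smul]
    have hexpr : bigD (Hchain G R σ) + bigH G R (Dchain σ) - Finsupp.single σ (1:ℚ)
        = ∑ x ∈ σ, ((sgn σ r * sgn (insert r σ) x) • Finsupp.single ((insert r σ).erase x) (1:ℚ)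
            + (sgn σ x) • Hchain G R (σ.erase x)) := by
      rw [hDH, hHD, Finset.sum_add_distrib]
      abel
    intro μ hμ
    rw [hexpr] at hμ
    obtain ⟨x, hx, hmem⟩ := Finset.mem_biUnion.mp (Finsupp.support_finset_sum hμ)
    have hxr : x ≠ r := fun hc => hrin (hc ▸ hx)
    have herase : (insert r σ).erase x = insert r (σ.erase x) :=
      Finset.erase_insert_of_ne (Ne.symm hxr)
    have hsub : UND G R σ ⊆ UND G R (σ.erase x) := UND_mono G R (Finset.erase_subset x σ)
    have hneτ : (UND G R (σ.erase x)).Nonempty := ⟨r, hsub hrmem⟩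
    set r' := (UND G R (σ.erase x)).min' hneτ with hr'def
    have hr'mem : r' ∈ UND G R (σ.erase x) := Finset.min'_mem _ hneτ
    have hr'und : ¬ ∃ v ∈ σ.erase x, G.Adj v r' := ((mem_UND G R).mp hr'mem).2
    have hr'R : r' ∈ R := ((mem_UND G R).mp hr'mem).1
    have hr'le : r' ≤ r := Finset.min'_le _ r (hsub hrmem)
    have hcardτ : (σ.erase x).card + 1 = σ.card := by
      rw [Finset.card_erase_of_mem hx]
      have : 0 < σ.card := Finset.card_pos.mpr ⟨x, hx⟩
      omega
    have hrnotinτ : r ∉ σ.erase x := fun hc => hrin (Finset.mem_of_mem_erase hc)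
    by_cases hr'r : r' = r
    · -- cancellation
      exfalso
      have hHτ : Hchain G R (σ.erase x) = sgn (σ.erase x) r • Finsupp.single (insert r (σ.erase x)) (1:ℚ) := by
        rw [Hchain, dif_pos hneτ, ← hr'def, hr'r, if_pos ⟨indep_mono G (Finset.erase_subset x σ) hi, hrnotinτ⟩]
      rw [hHτ, herase, smul_smul, ← add_smul] at hmem
      have hcoef : sgn σ r * sgn (insert r σ) x + sgn σ x * sgn (σ.erase x) r = 0 := by
        have e1 : (σ.filter (fun y => y < r)).card
            = ((σ.erase x).filter (fun y => y < r)).card + (if x < r then 1 else 0) :=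
          filter_lt_erase_card σ hx r
        have e2 : ((insert r σ).filter (fun y => y < x)).card
            = (σ.filter (fun y => y < x)).card + (if r < x then 1 else 0) :=
          filter_lt_insert_card σ hrin x
        simp only [sgn]
        rw [e1, e2]
        rcases lt_or_gt_of_ne hxr with h | h
        · rw [if_pos h, if_neg (asymm h)]
          ring
        · rw [if_neg (asymm h), if_pos h]
          ring
      rw [hcoef, zero_smul] at hmem
      simp at hmem
    · have hr'lt : r' < r := lt_of_le_of_ne hr'le hr'r
      -- μ is in the support of one of the two terms
      rcases Finset.mem_union.mp (Finsupp.support_add hmem) with hmem' | hmem'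
      · -- F1 : face insert r (σ.erase x)
        have hμeq : μ = insert r (σ.erase x) := by
          have := Finsupp.support_single_subset (Finsupp.support_smul hmem')
          rw [herase] at this
          simpa using this
        have hindep : G.IsIndep μ := by
          rw [hμeq]
          exact indep_mono G (Finset.insert_subset_insert r (Finset.erase_subset x σ))
            (indep_insert G hi hrund)
        have hr'inUND : r' ∈ UND G R μ := by
          rw [mem_UND]
          refine ⟨hr'R, ?_⟩
          rintro ⟨v, hv, hadj⟩
          rw [hμeq] at hv
          rcases Finset.mem_insert.mp hv with hv' | hv'
          · subst hv'
            exact hnadj r hrR r' hr'R (Ne.symm hr'r) hadj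
          · exact hr'und ⟨v, hv', hadj⟩
        have hcard : μ.card = σ.card := by
          rw [hμeq, Finset.card_insert_of_notMem hrnotinτ]
          exact hcardτ
        exact hgood μ r' hindep hcard hr'inUND hr'lt
      · -- F2 : Hchain (σ.erase x)
        have hmem'' := Finsupp.support_smul hmem'
        rw [Hchain, dif_pos hneτ] at hmem''
        split at hmem''
        rotate_left
        · simp at hmem''
        rename_i hgate
        have hμeq : μ = insert r' (σ.erase x) := by
          have := Finsupp.support_single_subset (Finsupp.support_smul hmem'')
          simpa [← hr'def] using this
        have hr'inUND : r' ∈ UND G R μ := by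
          rw [mem_UND]
          refine ⟨hr'R, ?_⟩
          rintro ⟨v, hv, hadj⟩
          rw [hμeq] at hv
          rcases Finset.mem_insert.mp hv with hv' | hv'
          · exact G.irrefl (hv' ▸ hadj)
          · exact hr'und ⟨v, hv', hadj⟩
        have hcard : μ.card = σ.card := by
          rw [hμeq, Finset.card_insert_of_notMem (by rw [← hr'def] at hgate; exact hgate.2)]
          exact hcardτ
        exact hgood μ r' (hμeq ▸ indep_insert G (indep_mono G (Finset.erase_subset x σ) hi) hr'und)
          hcard hr'inUND hr'lt

lemma bigH_eq_sum (z : Finset V →₀ ℚ) :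
    bigH G R z = ∑ t ∈ z.support, (z t) • Hchain G R t := by
  conv_lhs => rw [← Finsupp.sum_single z]
  rw [Finsupp.sum, map_sum]
  exact Finset.sum_congr rfl (fun t ht => by rw [bigH_single])

lemma contract (hnadj : ∀ u ∈ R, ∀ w ∈ R, u ≠ w → ¬ G.Adj u w) (k : ℕ) :
    ∀ n, ∀ z : Finset V →₀ ℚ,
      (∀ s ∈ z.support, G.IsIndep s ∧ s.card = k ∧
        ∃ h : (UND G R s).Nonempty, (R.filter (fun r => r ≤ (UND G R s).min' h)).card ≤ n) →
      bigD z = 0 →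
      ∃ w : Finset V →₀ ℚ,
        (∀ s ∈ w.support, G.IsIndep s ∧ s.card = k + 1 ∧ (UND G R s).Nonempty) ∧ bigD w = z := by
  intro n
  induction n with
  | zero =>
    intro z hz hD
    have hsupp : z.support = ∅ := by
      by_contra hne
      obtain ⟨s, hs⟩ := Finset.nonempty_iff_ne_empty.mpr hne
      obtain ⟨hi, hc, hh, hle⟩ := hz s hs
      have hmem : (UND G R s).min' hh ∈ R.filter (fun r => r ≤ (UND G R s).min' hh) :=
        Finset.mem_filter.mpr ⟨((mem_UND G R).mp (Finset.min'_mem _ hh)).1, le_refl _⟩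
      have := Finset.card_pos.mpr ⟨_, hmem⟩
      omega
    exact ⟨0, by simp, by simp [Finsupp.support_eq_empty.mp hsupp]⟩
  | succ n ih =>
    intro z hz hD
    set z₁ : Finset V →₀ ℚ := ∑ σ ∈ z.support,
      (z σ) • (bigD (Hchain G R σ) + bigH G R (Dchain σ) - Finsupp.single σ (1:ℚ)) with hz₁def
    have hsingles : ∑ σ ∈ z.support, (z σ) • Finsupp.single σ (1:ℚ) = z := by
      conv_rhs => rw [← Finsupp.sum_single z]
      rw [Finsupp.sum]
      exact Finset.sum_congr rfl (fun σ hσ => by rw [Finsupp.smul_single', mul_one])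
    have hDHz : bigD (bigH G R z) = ∑ σ ∈ z.support, (z σ) • bigD (Hchain G R σ) := by
      rw [bigH_eq_sum, map_sum]
      exact Finset.sum_congr rfl (fun σ hσ => by rw [map_smul])
    have hHDz : (0 : Finset V →₀ ℚ) = ∑ σ ∈ z.support, (z σ) • bigH G R (Dchain σ) := by
      have h1 : bigH G R (bigD z) = 0 := by rw [hD, map_zero]
      rw [← h1, bigD_eq_sum, map_sum]
      exact Finset.sum_congr rfl (fun σ hσ => by rw [map_smul])
    have hsum : z₁ = bigD (bigH G R z) - z := by
      rw [hz₁def]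
      calc ∑ σ ∈ z.support,
            (z σ) • (bigD (Hchain G R σ) + bigH G R (Dchain σ) - Finsupp.single σ (1:ℚ))
          = ∑ σ ∈ z.support, ((z σ) • bigD (Hchain G R σ) + (z σ) • bigH G R (Dchain σ)
              - (z σ) • Finsupp.single σ (1:ℚ)) :=
            Finset.sum_congr rfl (fun σ _ => by rw [smul_sub, smul_add])
        _ = (∑ σ ∈ z.support, (z σ) • bigD (Hchain G R σ))
              + (∑ σ ∈ z.support, (z σ) • bigH G R (Dchain σ))
              - (∑ σ ∈ z.support, (z σ) • Finsupp.single σ (1:ℚ)) := by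
            rw [Finset.sum_sub_distrib, Finset.sum_add_distrib]
        _ = bigD (bigH G R z) + 0 - z := by rw [← hDHz, ← hHDz, hsingles]
        _ = bigD (bigH G R z) - z := by rw [add_zero]
    have hz₁D : bigD z₁ = 0 := by
      rw [hsum, map_sub, bigD_bigD, hD, sub_zero]
    have hz₁supp : ∀ s ∈ z₁.support, G.IsIndep s ∧ s.card = k ∧
        ∃ h : (UND G R s).Nonempty, (R.filter (fun r => r ≤ (UND G R s).min' h)).card ≤ n := by
      intro s hs
      rw [hz₁def] at hs
      obtain ⟨σ, hσ, hmem⟩ := Finset.mem_biUnion.mp (Finsupp.support_finset_sum hs)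
      obtain ⟨hiσ, hcσ, hndσ, hmeasσ⟩ := hz σ hσ
      obtain ⟨his, hcs, hnds, hlt⟩ := key G R hnadj σ hiσ hndσ s (Finsupp.support_smul hmem)
      refine ⟨his, hcs.trans hcσ, hnds, ?_⟩
      have hss : R.filter (fun r => r ≤ (UND G R s).min' hnds)
          ⊂ R.filter (fun r => r ≤ (UND G R σ).min' hndσ) := by
        constructor
        · intro y hy
          rw [Finset.mem_filter] at hy ⊢
          exact ⟨hy.1, le_of_lt (lt_of_le_of_lt hy.2 hlt)⟩
        · intro hsub'
          have h1 : (UND G R σ).min' hndσ ∈ R.filter (fun r => r ≤ (UND G R σ).min' hndσ) :=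
            Finset.mem_filter.mpr ⟨((mem_UND G R).mp (Finset.min'_mem _ hndσ)).1, le_refl _⟩
          have h2 := hsub' h1
          rw [Finset.mem_filter] at h2
          exact absurd h2.2 (not_le.mpr hlt)
      have := Finset.card_lt_card hss
      omega
    obtain ⟨w₁, hw₁supp, hw₁D⟩ := ih z₁ hz₁supp hz₁D
    refine ⟨bigH G R z - w₁, ?_, ?_⟩
    · intro s hs
      rcases Finset.mem_union.mp (Finsupp.support_sub hs) with hs' | hs'
      · rw [bigH_eq_sum] at hs'
        obtain ⟨σ, hσ, hmem⟩ := Finset.mem_biUnion.mp (Finsupp.support_finset_sum hs')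
        obtain ⟨his, hcs, hnds⟩ := Hchain_support G R (Finsupp.support_smul hmem)
        exact ⟨his, by rw [hcs, (hz σ hσ).2.1], hnds⟩
      · exact hw₁supp s hs'
    · rw [map_sub, hw₁D, hsum]
      abel
end Graph

section Transfer

variable (G : SimpleGraph V)

noncomputable instance (k : ℕ) : Fintype (IndFace G k) := by
  unfold IndFace; exact Subtype.fintype _

noncomputable instance (k : ℕ) : Module.Finite ℚ (IndChains G k) :=
  Module.Finite.equiv (Finsupp.linearEquivFunOnFinite ℚ ℚ (IndFace G k)).symm

noncomputable instance : Module.Finite ℚ (Finset V →₀ ℚ) :=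
  Module.Finite.equiv (Finsupp.linearEquivFunOnFinite ℚ ℚ (Finset V)).symm

noncomputable def eMap (k : ℕ) : IndChains G k →ₗ[ℚ] (Finset V →₀ ℚ) :=
  Finsupp.lmapDomain ℚ ℚ (fun f : IndFace G k => f.1)

lemma eMap_single (k : ℕ) (f : IndFace G k) (c : ℚ) :
    eMap G k (Finsupp.single f c) = Finsupp.single f.1 c := by
  rw [eMap, Finsupp.lmapDomain_apply, Finsupp.mapDomain_single]

lemma eMap_inj (k : ℕ) : Function.Injective (eMap G k) := by
  have hvi : Function.Injective (fun f : IndFace G k => f.1) :=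
    fun a b hab => Subtype.ext hab
  intro a b h
  apply Finsupp.mapDomain_injective hvi
  simpa [eMap, Finsupp.lmapDomain_apply] using h

lemma eMap_supp (k : ℕ) (z : IndChains G k) :
    ∀ s ∈ (eMap G k z).support, G.IsIndep s ∧ s.card = k := by
  intro s hs
  rw [eMap, Finsupp.lmapDomain_apply] at hs
  obtain ⟨f, hf, rfl⟩ := Finset.mem_image.mp (Finsupp.mapDomain_support hs)
  exact f.2

lemma eMap_surj (k : ℕ) (z' : Finset V →₀ ℚ)
    (h : ∀ s ∈ z'.support, G.IsIndep s ∧ s.card = k) :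
    ∃ z : IndChains G k, eMap G k z = z' := by
  have hvi : Function.Injective (fun f : IndFace G k => f.1) :=
    fun a b hab => Subtype.ext hab
  have hrange : ↑z'.support ⊆ Set.range (fun f : IndFace G k => f.1) := by
    intro s hs
    exact ⟨⟨s, h s hs⟩, rfl⟩
  exact ⟨Finsupp.comapDomain _ z' ((fun a _ b _ h => hvi h)),
    by rw [eMap, Finsupp.lmapDomain_apply, Finsupp.mapDomain_comapDomain _ hvi z' hrange]⟩

lemma eMap_comm (k : ℕ) :
    (eMap G k).comp (indBoundary G k) = bigD.comp (eMap G (k+1)) := by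
  apply Finsupp.lhom_ext
  intro f b
  simp only [LinearMap.comp_apply]
  rw [indBoundary, Finsupp.lsum_single, LinearMap.toSpanSingleton_apply, map_smul,
    eMap_single, bigD_single]
  congr 1
  rw [indBoundaryOf, map_sum, Dchain,
    ← Finset.sum_attach f.1 (fun x => sgn f.1 x • Finsupp.single (f.1.erase x) (1:ℚ))]
  refine Finset.sum_congr rfl (fun x hx => ?_)
  refine (map_smul (eMap G k) _ _).trans ?_
  exact congrArg (HSMul.hSMul ((-1 : ℚ) ^ _)) (eMap_single G k _ 1)

noncomputable def projT (T : Finset (Finset V)) :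
    (Finset V →₀ ℚ) →ₗ[ℚ] ({s : Finset V // s ∈ T} →₀ ℚ) where
  toFun := Finsupp.subtypeDomain (fun s => s ∈ T)
  map_add' := fun _ _ => Finsupp.subtypeDomain_add
  map_smul' := fun c v => by
    ext a
    simp [Finsupp.subtypeDomain_apply]

lemma projT_apply (T : Finset (Finset V)) (v : Finset V →₀ ℚ) (a : {s : Finset V // s ∈ T}) :
    projT T v a = v a.1 := rfl

end Transfer

end ThreeRule

open ThreeRule

/-- The generalized 3-rule: if all pairs of distinct vertices of `R` are at distance at
least `3` (non-adjacent with no common neighbor) and no independent set of `G \ R` has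
more than `|R|` elements, then the reduced rational homology of `Ind(G)` is concentrated
in dimension `|R| - 1`, where its rank equals the number of independent sets `σ` of
`G \ R` of size `|R|` with `R ⊆ ⋃_{v ∈ σ} N(v)`. -/
theorem generalized_three_rule_homology (G : SimpleGraph V) (R : Finset V)
    (hR : R.Nonempty)
    (hdist : ∀ u ∈ R, ∀ w ∈ R, u ≠ w →
      ¬ G.Adj u w ∧ ∀ x : V, ¬(G.Adj u x ∧ G.Adj w x))
    (hmax : ∀ σ : Finset V, (∀ x ∈ σ, x ∉ R) → G.IsIndep σ → σ.card ≤ R.card) :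
    reducedHomologyRank G (R.card - 1)
      = (Finset.univ.filter (fun σ => (∀ x ∈ σ, x ∉ R) ∧ G.IsIndep σ ∧
          σ.card = R.card ∧ ∀ w ∈ R, ∃ v ∈ σ, G.Adj v w)).card
    ∧ ∀ i : ℕ, i ≠ R.card - 1 → reducedHomologyRank G i = 0 := by
  obtain ⟨m', hm'⟩ : ∃ m', R.card = m' + 1 :=
    ⟨R.card - 1, by have := Finset.card_pos.mpr hR; omega⟩
  have hnadj : ∀ u ∈ R, ∀ w ∈ R, u ≠ w → ¬ G.Adj u w :=
    fun u hu w hw hne => (hdist u hu w hw hne).1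
  have hncom : ∀ u ∈ R, ∀ w ∈ R, u ≠ w → ∀ x, ¬(G.Adj u x ∧ G.Adj w x) :=
    fun u hu w hw hne => (hdist u hu w hw hne).2
  set T := Finset.univ.filter (fun σ : Finset V => (∀ x ∈ σ, x ∉ R) ∧ G.IsIndep σ ∧
      σ.card = R.card ∧ ∀ w ∈ R, ∃ v ∈ σ, G.Adj v w) with hT
  have hmemT : ∀ s : Finset V, s ∈ T ↔ ((∀ x ∈ s, x ∉ R) ∧ G.IsIndep s ∧
      s.card = R.card ∧ ∀ w ∈ R, ∃ v ∈ s, G.Adj v w) := by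
    intro s
    rw [hT, Finset.mem_filter]
    simp
  -- CL1 : dominating independent sets are exactly the elements of T
  have hdomfacts : ∀ σ : Finset V, G.IsIndep σ → (∀ w ∈ R, ∃ v ∈ σ, G.Adj v w) →
      (∀ x ∈ σ, x ∉ R) ∧ σ.card = R.card := by
    intro σ hi hdom
    have hdisj : ∀ x ∈ σ, x ∉ R := by
      intro x hx hxR
      obtain ⟨v, hv, hadj⟩ := hdom x hxR
      exact hi v hv x hx hadj
    refine ⟨hdisj, le_antisymm (hmax σ hdisj hi) ?_⟩
    set f : V → V := fun r => if h : r ∈ R then (hdom r h).choose else r with hf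
    apply Finset.card_le_card_of_injOn f
    · intro r hr
      simp only [hf, dif_pos (show r ∈ R by simpa using hr)]
      exact ((hdom r hr).choose_spec).1
    · intro r₁ h1 r₂ h2 heq
      rw [Finset.mem_coe] at h1 h2
      by_contra hne
      have s1 := (hdom r₁ h1).choose_spec
      have s2 := (hdom r₂ h2).choose_spec
      rw [hf] at heq
      simp only [dif_pos h1, dif_pos h2] at heq
      exact hncom r₁ h1 r₂ h2 hne ((hdom r₁ h1).choose) ⟨s1.2.symm, heq ▸ s2.2.symm⟩
  have hTdom : ∀ s ∈ T, ∀ w ∈ R, ∃ v ∈ s, G.Adj v w := fun s hs => ((hmemT s).mp hs).2.2.2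
  have hUNDne : ∀ s : Finset V, ¬(∀ w ∈ R, ∃ v ∈ s, G.Adj v w) → (UND G R s).Nonempty := by
    intro s h
    push_neg at h
    obtain ⟨r, hrR, hnr⟩ := h
    refine ⟨r, (mem_UND G R).mpr ⟨hrR, ?_⟩⟩
    rintro ⟨v, hv, hadj⟩
    exact hnr v hv hadj
  have hUNDne_card : ∀ s : Finset V, G.IsIndep s → s.card ≠ R.card → (UND G R s).Nonempty :=
    fun s hi hc => hUNDne s (fun hdom => hc (hdomfacts s hi hdom).2)
  -- CL2
  have hCL2 : ∀ τ : Finset V, G.IsIndep τ → τ.card = R.card + 1 → ∀ x ∈ τ,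
      ¬(∀ w ∈ R, ∃ v ∈ τ.erase x, G.Adj v w) := by
    intro τ hiτ hcτ x hx hdom
    have hi' : G.IsIndep (τ.erase x) := indep_mono G (Finset.erase_subset x τ) hiτ
    obtain ⟨hdisj, hcard⟩ := hdomfacts _ hi' hdom
    by_cases hxR : x ∈ R
    · obtain ⟨v, hv, hadj⟩ := hdom x hxR
      exact hiτ v (Finset.mem_of_mem_erase hv) x hx hadj
    · have hdisjτ : ∀ y ∈ τ, y ∉ R := by
        intro y hy
        by_cases hyx : y = x
        · exact hyx ▸ hxR
        · exact hdisj y (Finset.mem_erase.mpr ⟨hyx, hy⟩)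
      have := hmax τ hdisjτ hiτ
      omega
  -- main workhorse: nondominating cycles are boundaries
  have hmain : ∀ (i : ℕ) (z : IndChains G (i+1)),
      bigD (eMap G (i+1) z) = 0 →
      (∀ s ∈ (eMap G (i+1) z).support, (UND G R s).Nonempty) →
      ∃ w : IndChains G (i+1+1), indBoundary G (i+1) w = z := by
    intro i z hDz hnd
    obtain ⟨w', hw'supp, hw'D⟩ := contract G R hnadj (i+1) R.card (eMap G (i+1) z)
      (fun s hs => ⟨(eMap_supp G (i+1) z s hs).1, (eMap_supp G (i+1) z s hs).2, hnd s hs,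
        Finset.card_le_card (Finset.filter_subset _ _)⟩) hDz
    obtain ⟨w, hw⟩ := eMap_surj G (i+1+1) w'
      (fun s hs => ⟨(hw'supp s hs).1, (hw'supp s hs).2.1⟩)
    refine ⟨w, eMap_inj G (i+1) ?_⟩
    have hc := LinearMap.congr_fun (eMap_comm G (i+1)) w
    simp only [LinearMap.comp_apply] at hc
    rw [hc, hw, hw'D]
  constructor
  · -- the interesting dimension
    have hidx : R.card - 1 = m' := by omega
    rw [hidx]
    -- the comparison map φ
    set φ : LinearMap.ker (indBoundary G m') →ₗ[ℚ] ({s : Finset V // s ∈ T} →₀ ℚ) :=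
      (projT T).comp ((eMap G (m'+1)).comp (LinearMap.ker (indBoundary G m')).subtype)
      with hφ
    have hφ_apply : ∀ (x : LinearMap.ker (indBoundary G m')) (a : {s : Finset V // s ∈ T}),
        φ x a = eMap G (m'+1) x.1 a.1 := fun x a => rfl
    -- surjectivity of φ onto single generators
    have hsur : ∀ (σ : Finset V) (hσ : σ ∈ T),
        ∃ x : LinearMap.ker (indBoundary G m'),
          φ x = Finsupp.single (⟨σ, hσ⟩ : {s : Finset V // s ∈ T}) (1:ℚ) := by
      intro σ hσ
      obtain ⟨hdisjσ, hiσ, hcσ, hdomσ⟩ := (hmemT σ).mp hσ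
      set q : Finset V →₀ ℚ := Finsupp.single σ (1:ℚ) with hq
      have hsuppDq : ∀ s ∈ (bigD q).support, G.IsIndep s ∧ s.card = m' ∧
          ∃ h : (UND G R s).Nonempty,
            (R.filter (fun r => r ≤ (UND G R s).min' h)).card ≤ R.card := by
        intro s hs
        obtain ⟨t, ht, x, hx, rfl⟩ := bigD_support hs
        have htσ : t = σ := by
          have := Finsupp.support_single_subset ht
          simpa using this
        subst htσ
        have his : G.IsIndep (t.erase x) := indep_mono G (Finset.erase_subset x t) hiσ
        have hcs : (t.erase x).card = m' := by
          rw [Finset.card_erase_of_mem hx]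
          omega
        exact ⟨his, hcs, hUNDne_card _ his (by omega), Finset.card_le_card (Finset.filter_subset _ _)⟩
      obtain ⟨a, hasupp, haD⟩ := contract G R hnadj m' R.card (bigD q) hsuppDq (bigD_bigD q)
      set u : Finset V →₀ ℚ := q - a with hu
      have hDu : bigD u = 0 := by rw [hu, map_sub, haD, sub_self]
      have hsuppu : ∀ s ∈ u.support, G.IsIndep s ∧ s.card = m'+1 := by
        intro s hs
        rcases Finset.mem_union.mp (Finsupp.support_sub hs) with hs' | hs'
        · have : s = σ := by
            have := Finsupp.support_single_subset hs'
            simpa using this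
          subst this
          exact ⟨hiσ, by omega⟩
        · exact ⟨(hasupp s hs').1, (hasupp s hs').2.1⟩
      obtain ⟨zc, hzc⟩ := eMap_surj G (m'+1) u hsuppu
      have hzker : indBoundary G m' zc = 0 := by
        apply eMap_inj G m'
        have hc := LinearMap.congr_fun (eMap_comm G m') zc
        simp only [LinearMap.comp_apply] at hc
        rw [hc, hzc, hDu, map_zero]
      refine ⟨⟨zc, LinearMap.mem_ker.mpr hzker⟩, ?_⟩
      ext a'
      rw [hφ_apply]
      have ha0 : a a'.1 = 0 := by
        by_contra hne
        have hmem := Finsupp.mem_support_iff.mpr hne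
        obtain ⟨-, -, hnd⟩ := hasupp a'.1 hmem
        obtain ⟨r, hr⟩ := hnd
        obtain ⟨hrR, hnr⟩ := (mem_UND G R).mp hr
        exact hnr (hTdom a'.1 a'.2 r hrR)
      rw [hzc, hu, Finsupp.sub_apply, ha0, sub_zero, hq]
      rcases a' with ⟨s, hs⟩
      simp only [Finsupp.single_apply, Subtype.mk.injEq]
    have hranget : LinearMap.range φ = ⊤ := by
      apply le_antisymm le_top
      rw [← Module.Basis.span_eq (Finsupp.basisSingleOne (ι := {s : Finset V // s ∈ T}) (R := ℚ))]
      apply Submodule.span_le.mpr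
      rintro _ ⟨⟨σ, hσ⟩, rfl⟩
      rw [Finsupp.coe_basisSingleOne]
      obtain ⟨x, hx⟩ := hsur σ hσ
      exact ⟨x, hx⟩
    have hkerφ : LinearMap.ker φ
        = (LinearMap.range (indBoundary G (m'+1))).comap
            (LinearMap.ker (indBoundary G m')).subtype := by
      ext x
      rw [LinearMap.mem_ker, Submodule.mem_comap]
      constructor
      · intro h0
        have hx1 : indBoundary G m' x.1 = 0 := x.2
        have hDz : bigD (eMap G (m'+1) x.1) = 0 := by
          have hc := LinearMap.congr_fun (eMap_comm G m') x.1
          simp only [LinearMap.comp_apply] at hc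
          rw [← hc, hx1, map_zero]
        have hnd : ∀ s ∈ (eMap G (m'+1) x.1).support, (UND G R s).Nonempty := by
          intro s hs
          obtain ⟨his, hcs⟩ := eMap_supp G (m'+1) x.1 s hs
          have hsnT : s ∉ T := by
            intro hsT
            have hval : eMap G (m'+1) x.1 s = 0 := by
              have := DFunLike.congr_fun h0 (⟨s, hsT⟩ : {s : Finset V // s ∈ T})
              rw [hφ_apply] at this
              simpa using this
            exact Finsupp.mem_support_iff.mp hs hval
          refine hUNDne s (fun hdom => hsnT ((hmemT s).mpr
            ⟨(hdomfacts s his hdom).1, his, by omega, hdom⟩))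
        obtain ⟨w, hw⟩ := hmain m' x.1 hDz hnd
        exact ⟨w, hw⟩
      · rintro ⟨w, hw⟩
        have hxw : eMap G (m'+1) x.1 = bigD (eMap G (m'+1+1) w) := by
          have hc := LinearMap.congr_fun (eMap_comm G (m'+1)) w
          simp only [LinearMap.comp_apply] at hc
          rw [← hc, hw]
          rfl
        ext a'
        rw [hφ_apply]
        rcases a' with ⟨s, hsT⟩
        simp only
        by_contra hne
        have hs : s ∈ (eMap G (m'+1) x.1).support := Finsupp.mem_support_iff.mpr (by
          intro hc; exact hne (by simpa using hc))
        rw [hxw] at hs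
        obtain ⟨t, ht, y, hy, rfl⟩ := bigD_support hs
        obtain ⟨hit, hct⟩ := eMap_supp G (m'+1+1) w t ht
        exact hCL2 t hit (by omega) y hy (hTdom _ hsT)
    -- now count
    have hrank := LinearMap.finrank_range_add_finrank_ker φ
    rw [hranget, finrank_top, Module.finrank_finsupp_self, Fintype.card_coe, hkerφ] at hrank
    have hq := Submodule.finrank_quotient_add_finrank
      ((LinearMap.range (indBoundary G (m'+1))).comap
        (LinearMap.ker (indBoundary G m')).subtype)
    rw [reducedHomologyRank]
    omega
  · -- other dimensions vanish
    intro i hi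
    have hker : LinearMap.ker (indBoundary G i) ≤ LinearMap.range (indBoundary G (i+1)) := by
      intro z hz
      rw [LinearMap.mem_ker] at hz
      have hDz : bigD (eMap G (i+1) z) = 0 := by
        have hc := LinearMap.congr_fun (eMap_comm G i) z
        simp only [LinearMap.comp_apply] at hc
        rw [← hc, hz, map_zero]
      have hnd : ∀ s ∈ (eMap G (i+1) z).support, (UND G R s).Nonempty := by
        intro s hs
        obtain ⟨his, hcs⟩ := eMap_supp G (i+1) z s hs
        exact hUNDne_card s his (by omega)
      obtain ⟨w, hw⟩ := hmain i z hDz hnd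
      exact ⟨w, hw⟩
    rw [reducedHomologyRank]
    have h1 : (LinearMap.range (indBoundary G (i + 1))).comap
        (LinearMap.ker (indBoundary G i)).subtype = ⊤ :=
      Submodule.comap_subtype_eq_top.mpr hker
    rw [h1]
    have h2 := Submodule.finrank_quotient_add_finrank
      (⊤ : Submodule ℚ (LinearMap.ker (indBoundary G i)))
    rw [finrank_top] at h2
    omega
end

section
/- Let G be a graph and D ⊆ V(G) such that G \ D has no edges. For each independent set τ of G[D], the set of independent sets σ of G with σ ∩ D = τ is in bijection with the independent sets of the graph obtained from G by deleting D and all neighbors of vertices of τ; in particular Σ_{σ ∈ Ind(G)} (-1)^{|σ|} = Σ_{τ ∈ Ind(G[D])} (-1)^{|τ|} · Σ_{ρ ⊆ S(τ)} (-1)^{|ρ|}, where S(τ) = (V(G) \ D) \ ∪_{v∈τ} N(v), so |Σ_{σ ∈ Ind(G)} (-1)^{|σ|}| ≤ #{τ ∈ Ind(G[D]) : ∪_{v∈τ} N(v) ⊇ V(G) \ D}. -/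
open Finset

attribute [local instance] Classical.propDecidable

lemma natAbs_sum_le' {ι : Type*} (s : Finset ι) (f : ι → ℤ) :
    (∑ i ∈ s, f i).natAbs ≤ ∑ i ∈ s, (f i).natAbs := by
  classical
  induction s using Finset.induction_on with
  | empty => simp
  | insert _ _ h ih =>
    rw [Finset.sum_insert h, Finset.sum_insert h]
    exact le_trans (Int.natAbs_add_le _ _) (Nat.add_le_add_left ih _)

section aux

variable {V : Type*} [Fintype V] [DecidableEq V] (G : SimpleGraph V) (D : Finset V)

/-- Core bijection facts. -/
lemma cohomological_aux (hedge : ∀ u v : V, u ∉ D → v ∉ D → ¬ G.Adj u v)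
    (τ : Finset V) (hτD : τ ⊆ D) (hτ : G.IsIndep τ) :
    (∀ σ : Finset V, G.IsIndep σ → σ ∩ D = τ →
        σ \ D ⊆ Finset.univ.filter (fun w => w ∉ D ∧ ∀ v ∈ τ, ¬ G.Adj v w)) ∧
    (∀ ρ : Finset V, ρ ⊆ Finset.univ.filter (fun w => w ∉ D ∧ ∀ v ∈ τ, ¬ G.Adj v w) →
        G.IsIndep (τ ∪ ρ) ∧ (τ ∪ ρ) ∩ D = τ ∧ (τ ∪ ρ) \ D = ρ) ∧
    (∀ σ : Finset V, G.IsIndep σ → σ ∩ D = τ → τ ∪ σ \ D = σ) := by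
  refine ⟨?_, ?_, ?_⟩
  · intro σ hσ hσD w hw
    rw [mem_sdiff] at hw
    refine mem_filter.2 ⟨mem_univ _, hw.2, fun v hv hadj => ?_⟩
    have hvσ : v ∈ σ := (mem_inter.1 (hσD ▸ hv)).1
    exact hσ v hvσ w hw.1 hadj
  · intro ρ hρ
    have hρD : ∀ w ∈ ρ, w ∉ D := fun w hw => (mem_filter.1 (hρ hw)).2.1
    have hρN : ∀ w ∈ ρ, ∀ v ∈ τ, ¬ G.Adj v w := fun w hw => (mem_filter.1 (hρ hw)).2.2
    refine ⟨?_, ?_, ?_⟩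
    · intro u hu v hv hadj
      rcases mem_union.1 hu with hu | hu <;> rcases mem_union.1 hv with hv | hv
      · exact hτ u hu v hv hadj
      · exact hρN v hv u hu hadj
      · exact hρN u hu v hv hadj.symm
      · exact hedge u v (hρD u hu) (hρD v hv) hadj
    · ext x
      simp only [mem_inter, mem_union]
      constructor
      · rintro ⟨hx | hx, hxD⟩
        · exact hx
        · exact absurd hxD (hρD x hx)
      · exact fun hx => ⟨Or.inl hx, hτD hx⟩
    · ext x
      simp only [mem_sdiff, mem_union]
      constructor
      · rintro ⟨hx | hx, hxD⟩
        · exact absurd (hτD hx) hxD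
        · exact hx
      · exact fun hx => ⟨Or.inr hx, hρD x hx⟩
  · intro σ hσ hσD
    rw [← hσD]
    ext x
    simp only [mem_union, mem_inter, mem_sdiff]
    constructor
    · rintro (⟨hx, _⟩ | ⟨hx, _⟩) <;> exact hx
    · intro hx
      by_cases hxD : x ∈ D
      · exact Or.inl ⟨hx, hxD⟩
      · exact Or.inr ⟨hx, hxD⟩

end aux

/-- Let `D ⊆ V(G)` be such that `G \ D` has no edges, and for an independent set `τ` of
`G[D]` let `S(τ) = (V(G) \ D) \ ⋃_{v ∈ τ} N(v)`.  Then (i) the independent sets `σ` of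
`G` with `σ ∩ D = τ` are in bijection with the subsets of `S(τ)` (the independent sets
of the graph obtained by deleting `D` and all neighbors of `τ`); (ii)
`∑_{σ ∈ Ind(G)} (-1)^{|σ|} = ∑_{τ ∈ Ind(G[D])} (-1)^{|τ|} ∑_{ρ ⊆ S(τ)} (-1)^{|ρ|}`;
(iii) hence `|∑_{σ ∈ Ind(G)} (-1)^{|σ|}|` is at most the number of `τ ∈ Ind(G[D])`
with `⋃_{v ∈ τ} N(v) ⊇ V(G) \ D`. -/
theorem cohomological_method {V : Type*} [Fintype V] [DecidableEq V] (G : SimpleGraph V)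
    (D : Finset V) (hedge : ∀ u v : V, u ∉ D → v ∉ D → ¬ G.Adj u v) :
    (∀ τ : Finset V, τ ⊆ D → G.IsIndep τ →
        Nonempty ({σ : Finset V // G.IsIndep σ ∧ σ ∩ D = τ} ≃
          {ρ : Finset V // ρ ⊆ Finset.univ.filter
            (fun w => w ∉ D ∧ ∀ v ∈ τ, ¬ G.Adj v w)}))
    ∧ (∑ s ∈ Finset.univ.filter G.IsIndep, (-1 : ℤ) ^ s.card
        = ∑ τ ∈ Finset.univ.filter (fun τ => τ ⊆ D ∧ G.IsIndep τ),
            (-1 : ℤ) ^ τ.card *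
              ∑ ρ ∈ (Finset.univ.filter
                  (fun w => w ∉ D ∧ ∀ v ∈ τ, ¬ G.Adj v w)).powerset,
                (-1 : ℤ) ^ ρ.card)
    ∧ (∑ s ∈ Finset.univ.filter G.IsIndep, (-1 : ℤ) ^ s.card).natAbs
        ≤ (Finset.univ.filter (fun τ => τ ⊆ D ∧ G.IsIndep τ ∧
            ∀ w : V, w ∉ D → ∃ v ∈ τ, G.Adj v w)).card := by
  classical
  have key := fun τ hτD hτ => cohomological_aux G D hedge τ hτD hτ
  have part2 : (∑ s ∈ Finset.univ.filter G.IsIndep, (-1 : ℤ) ^ s.card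
        = ∑ τ ∈ Finset.univ.filter (fun τ => τ ⊆ D ∧ G.IsIndep τ),
            (-1 : ℤ) ^ τ.card *
              ∑ ρ ∈ (Finset.univ.filter
                  (fun w => w ∉ D ∧ ∀ v ∈ τ, ¬ G.Adj v w)).powerset,
                (-1 : ℤ) ^ ρ.card) := by
    rw [← Finset.sum_fiberwise_of_maps_to (g := fun σ => σ ∩ D)
      (t := Finset.univ.filter (fun τ => τ ⊆ D ∧ G.IsIndep τ))
      (fun σ hσ => by
        rw [mem_filter] at hσ ⊢
        refine ⟨mem_univ _, inter_subset_right, ?_⟩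
        intro u hu v hv
        exact hσ.2 u (mem_inter.1 hu).1 v (mem_inter.1 hv).1)]
    refine Finset.sum_congr rfl fun τ hτ => ?_
    rw [mem_filter] at hτ
    obtain ⟨-, hτD, hτI⟩ := hτ
    obtain ⟨h1, h2, h3⟩ := key τ hτD hτI
    rw [Finset.mul_sum]
    refine Finset.sum_nbij' (fun σ => σ \ D) (fun ρ => τ ∪ ρ) ?_ ?_ ?_ ?_ ?_
    · intro σ hσ
      rw [mem_filter, mem_filter] at hσ
      exact mem_powerset.2 (h1 σ hσ.1.2 hσ.2)
    · intro ρ hρ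
      rw [mem_powerset] at hρ
      obtain ⟨i1, i2, _⟩ := h2 ρ hρ
      exact mem_filter.2 ⟨mem_filter.2 ⟨mem_univ _, i1⟩, i2⟩
    · intro σ hσ
      rw [mem_filter, mem_filter] at hσ
      exact h3 σ hσ.1.2 hσ.2
    · intro ρ hρ
      exact (h2 ρ (mem_powerset.1 hρ)).2.2
    · intro σ hσ
      rw [mem_filter, mem_filter] at hσ
      have hdisj : Disjoint τ (σ \ D) := by
        refine Finset.disjoint_left.2 fun x hx hx' => ?_
        exact (mem_sdiff.1 hx').2 (hτD hx)
      have hσeq : σ = τ ∪ σ \ D := (h3 σ hσ.1.2 hσ.2).symm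
      rw [← pow_add, ← Finset.card_union_of_disjoint hdisj, ← hσeq]
  refine ⟨?_, part2, ?_⟩
  · intro τ hτD hτ
    obtain ⟨h1, h2, h3⟩ := key τ hτD hτ
    exact ⟨{
      toFun := fun σ => ⟨σ.1 \ D, h1 σ.1 σ.2.1 σ.2.2⟩
      invFun := fun ρ => ⟨τ ∪ ρ.1, (h2 ρ.1 ρ.2).1, (h2 ρ.1 ρ.2).2.1⟩
      left_inv := fun σ => Subtype.ext (h3 σ.1 σ.2.1 σ.2.2)
      right_inv := fun ρ => Subtype.ext (h2 ρ.1 ρ.2).2.2 }⟩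
  · rw [part2]
    have hsimp : ∀ τ ∈ Finset.univ.filter (fun τ => τ ⊆ D ∧ G.IsIndep τ),
        (-1 : ℤ) ^ τ.card *
          ∑ ρ ∈ (Finset.univ.filter
              (fun w => w ∉ D ∧ ∀ v ∈ τ, ¬ G.Adj v w)).powerset,
            (-1 : ℤ) ^ ρ.card
        = if (∀ w : V, w ∉ D → ∃ v ∈ τ, G.Adj v w) then (-1 : ℤ) ^ τ.card else 0 := by
      intro τ _
      rw [Finset.sum_powerset_neg_one_pow_card]
      have hiff : (Finset.univ.filter (fun w => w ∉ D ∧ ∀ v ∈ τ, ¬ G.Adj v w) = ∅)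
          ↔ (∀ w : V, w ∉ D → ∃ v ∈ τ, G.Adj v w) := by
        rw [Finset.filter_eq_empty_iff]
        constructor
        · intro h w hw
          by_contra hc
          push_neg at hc
          exact h (mem_univ w) ⟨hw, fun v hv => hc v hv⟩
        · rintro h w - ⟨hw, hn⟩
          obtain ⟨v, hv, hadj⟩ := h w hw
          exact hn v hv hadj
      by_cases hc : ∀ w : V, w ∉ D → ∃ v ∈ τ, G.Adj v w
      · rw [if_pos hc, if_pos (hiff.2 hc), mul_one]
      · rw [if_neg hc, if_neg (fun he => hc (hiff.1 he)), mul_zero]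
    rw [Finset.sum_congr rfl hsimp, Finset.sum_ite, Finset.sum_const_zero, add_zero]
    calc (∑ τ ∈ (Finset.univ.filter (fun τ => τ ⊆ D ∧ G.IsIndep τ)).filter
            (fun τ => ∀ w : V, w ∉ D → ∃ v ∈ τ, G.Adj v w), (-1 : ℤ) ^ τ.card).natAbs
        ≤ ∑ τ ∈ (Finset.univ.filter (fun τ => τ ⊆ D ∧ G.IsIndep τ)).filter
            (fun τ => ∀ w : V, w ∉ D → ∃ v ∈ τ, G.Adj v w), ((-1 : ℤ) ^ τ.card).natAbs :=
          natAbs_sum_le' _ _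
      _ = ∑ τ ∈ (Finset.univ.filter (fun τ => τ ⊆ D ∧ G.IsIndep τ)).filter
            (fun τ => ∀ w : V, w ∉ D → ∃ v ∈ τ, G.Adj v w), 1 := by
          refine Finset.sum_congr rfl fun τ _ => ?_
          simp [Int.natAbs_pow]
      _ = _ := by
          rw [Finset.sum_const, smul_eq_mul, mul_one]
          congr 1
          rw [Finset.filter_filter]
          exact Finset.filter_congr (fun τ _ => by tauto)
end
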